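/- arXiv:1508.07519 — 3 statements merged into one kernel-verified Lean document; each statement's English description precedes it below -/
import Mathlib

section
/- Let Ω be homogeneous of degree zero on ℝⁿ \ {0} with mean value zero on S^{n-1} and Ω ∈ L¹(S^{n-1}). If Ω satisfies the regularity condition sup_{|ξ|=1} ∫_{S^{n-1}} |Ω(θ) − Ω(θ+δξ)| dσ(θ) ≤ C n δ ∫_{S^{n-1}} |Ω(θ)| dσ(θ) for all 0 < δ < 1/n (where C is a constant independent of the dimension, and Ω is evaluated off the sphere via its degree-zero homogeneous extension), then Ω satisfies the L¹-Dini condition. -/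
open MeasureTheory Filter Set

noncomputable section

/-- The unit sphere `S^{n-1}` in `ℝⁿ`. -/
abbrev unitSphere (n : ℕ) := Metric.sphere (0 : EuclideanSpace ℝ (Fin n)) 1

/-- The surface (area) measure `σ` on the unit sphere `S^{n-1}`. -/
def sphereMeasure (n : ℕ) : Measure (unitSphere n) :=
  (volume : Measure (EuclideanSpace ℝ (Fin n))).toSphere

/-- `Ω` is homogeneous of degree zero on `ℝⁿ \ {0}`. -/
def HomogeneousZero {n : ℕ} (Ω : EuclideanSpace ℝ (Fin n) → ℝ) : Prop :=
  ∀ c : ℝ, 0 < c → ∀ x : EuclideanSpace ℝ (Fin n), x ≠ 0 → Ω (c • x) = Ω x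

/-- The `L¹` integral modulus of continuity of `Ω`, defined via rotations:
`ω₁(δ) = sup_{‖ρ‖ ≤ δ} ∫_{S^{n-1}} |Ω(ρθ) - Ω(θ)| dσ(θ)`, where `ρ` ranges over
rotations of `ℝⁿ` (linear isometries of determinant `1`) and
`‖ρ‖ = sup{ |ρx' - x'| : x' ∈ S^{n-1} }`. -/
def omegaRot (n : ℕ) (Ω : EuclideanSpace ℝ (Fin n) → ℝ) (δ : ℝ) : ℝ :=
  sSup {I : ℝ | ∃ ρ : EuclideanSpace ℝ (Fin n) ≃ₗᵢ[ℝ] EuclideanSpace ℝ (Fin n),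
    LinearMap.det (ρ.toLinearEquiv : EuclideanSpace ℝ (Fin n) →ₗ[ℝ] EuclideanSpace ℝ (Fin n)) = 1 ∧
    (∀ x : EuclideanSpace ℝ (Fin n), ‖x‖ = 1 → ‖ρ x - x‖ ≤ δ) ∧
    I = ∫ θ : unitSphere n, |Ω (ρ (θ : EuclideanSpace ℝ (Fin n))) - Ω (θ : EuclideanSpace ℝ (Fin n))| ∂(sphereMeasure n)}

/-- The `L¹` integral modulus of continuity of `Ω`, defined via translations:
`ω̃₁(δ) = sup_{|h| ≤ δ} ∫_{S^{n-1}} |Ω(θ + h) - Ω(θ)| dσ(θ)`, where `Ω` is evaluated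
off the sphere via its degree-zero homogeneous extension. -/
def omegaTrans (n : ℕ) (Ω : EuclideanSpace ℝ (Fin n) → ℝ) (δ : ℝ) : ℝ :=
  sSup {I : ℝ | ∃ h : EuclideanSpace ℝ (Fin n), ‖h‖ ≤ δ ∧
    I = ∫ θ : unitSphere n, |Ω ((θ : EuclideanSpace ℝ (Fin n)) + h) - Ω (θ : EuclideanSpace ℝ (Fin n))| ∂(sphereMeasure n)}

/-- `Ω` satisfies the `L¹`-Dini condition. -/
def L1Dini (n : ℕ) (Ω : EuclideanSpace ℝ (Fin n) → ℝ) : Prop :=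
  Integrable (fun θ : unitSphere n => Ω (θ : EuclideanSpace ℝ (Fin n))) (sphereMeasure n) ∧
  ∫⁻ δ in Ioo (0 : ℝ) 1, ENNReal.ofReal (omegaRot n Ω δ / δ) < ⊤

/-- The truncated singular integral `∫_{|x-y| > ε} Ω(x-y)|x-y|^{-n} dμ(y)` of a signed
measure `μ`, where integration against `μ` is via its Jordan decomposition. -/
def truncT (n : ℕ) (Ω : EuclideanSpace ℝ (Fin n) → ℝ)
    (μ : SignedMeasure (EuclideanSpace ℝ (Fin n))) (x : EuclideanSpace ℝ (Fin n)) (ε : ℝ) : ℝ :=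
  (∫ y in {y | ε < ‖x - y‖}, Ω (x - y) / ‖x - y‖ ^ n ∂μ.toJordanDecomposition.posPart) -
  (∫ y in {y | ε < ‖x - y‖}, Ω (x - y) / ‖x - y‖ ^ n ∂μ.toJordanDecomposition.negPart)

/-- The principal-value singular integral `T_Ω μ(x) = p.v. ∫ Ω(x-y)|x-y|^{-n} dμ(y)`. -/
def TOmega (n : ℕ) (Ω : EuclideanSpace ℝ (Fin n) → ℝ)
    (μ : SignedMeasure (EuclideanSpace ℝ (Fin n))) (x : EuclideanSpace ℝ (Fin n)) : ℝ :=
  limUnder (nhdsWithin (0 : ℝ) (Ioi 0)) (truncT n Ω μ x)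


namespace L1A

open scoped Classical Pointwise ENNReal NNReal

variable {n : ℕ}

/-- normalization map -/
def qmap (n : ℕ) : EuclideanSpace ℝ (Fin n) → EuclideanSpace ℝ (Fin n) :=
  fun x => ‖x‖⁻¹ • x

lemma qmap_measurable : Measurable (qmap n) :=
  (measurable_norm.inv).smul measurable_id

lemma qmap_mem_sphere {x : EuclideanSpace ℝ (Fin n)} (hx : x ≠ 0) :
    qmap n x ∈ Metric.sphere (0 : EuclideanSpace ℝ (Fin n)) 1 := by
  have h : ‖x‖ ≠ 0 := norm_ne_zero_iff.2 hx
  simp only [qmap, mem_sphere_iff_norm, sub_zero, norm_smul, norm_inv, norm_norm]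
  exact inv_mul_cancel₀ h

/-- base point of the sphere -/
def bpt (hn : 0 < n) : unitSphere n :=
  ⟨EuclideanSpace.single ⟨0, hn⟩ 1, by simp⟩

/-- measurable retraction of the whole space onto the sphere -/
def sproj (hn : 0 < n) : EuclideanSpace ℝ (Fin n) → unitSphere n :=
  fun x => ⟨if qmap n x ∈ Metric.sphere (0 : EuclideanSpace ℝ (Fin n)) 1 then qmap n x
      else (bpt hn : EuclideanSpace ℝ (Fin n)),
    by split <;> first | assumption | exact (bpt hn).2⟩

lemma sproj_measurable (hn : 0 < n) : Measurable (sproj hn) := by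
  apply Measurable.subtype_mk
  have hms : MeasurableSet {x : EuclideanSpace ℝ (Fin n) |
      qmap n x ∈ Metric.sphere (0 : EuclideanSpace ℝ (Fin n)) 1} :=
    qmap_measurable Metric.isClosed_sphere.measurableSet
  exact Measurable.ite hms qmap_measurable measurable_const

lemma sproj_apply (hn : 0 < n) {x : EuclideanSpace ℝ (Fin n)} (hx : x ≠ 0) :
    (sproj hn x : EuclideanSpace ℝ (Fin n)) = ‖x‖⁻¹ • x := by
  simp only [sproj, if_pos (qmap_mem_sphere hx)]; rfl

lemma smul_sproj (hn : 0 < n) {x : EuclideanSpace ℝ (Fin n)} (hx : x ≠ 0) :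
    ‖x‖ • (sproj hn x : EuclideanSpace ℝ (Fin n)) = x := by
  rw [sproj_apply hn hx, smul_inv_smul₀ (norm_ne_zero_iff.2 hx)]

lemma sproj_val (hn : 0 < n) (θ : unitSphere n) : sproj hn (θ : EuclideanSpace ℝ (Fin n)) = θ := by
  have hθ : ‖(θ : EuclideanSpace ℝ (Fin n))‖ = 1 := by
    have := θ.2; rwa [mem_sphere_iff_norm, sub_zero] at this
  apply Subtype.ext
  rw [sproj_apply hn (by intro h; rw [h] at hθ; simp at hθ), hθ, inv_one, one_smul]

end L1A


namespace L1A
open scoped Pointwise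
variable {n : ℕ}

lemma norm_coe (θ : unitSphere n) : ‖(θ : EuclideanSpace ℝ (Fin n))‖ = 1 := by
  have := θ.2; rwa [mem_sphere_iff_norm, sub_zero] at this

lemma coe_ne_zero (θ : unitSphere n) : (θ : EuclideanSpace ℝ (Fin n)) ≠ 0 := by
  intro h
  have := norm_coe θ; rw [h] at this; simp at this

/-- the open cone over a subset of the sphere, as a preimage. -/
lemma cone_eq (s : Set (unitSphere n)) :
    (Ioo (0:ℝ) 1 • (Subtype.val '' s) : Set (EuclideanSpace ℝ (Fin n))) =
      qmap n ⁻¹' (Subtype.val '' s) ∩ {x | ‖x‖ ∈ Ioo (0:ℝ) 1} := by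
  ext x
  constructor
  · rintro ⟨r, hr, y, ⟨θ, hθ, rfl⟩, rfl⟩
    have hθ1 : ‖(θ : EuclideanSpace ℝ (Fin n))‖ = 1 := norm_coe θ
    have hnx : ‖r • (θ : EuclideanSpace ℝ (Fin n))‖ = r := by
      rw [norm_smul, hθ1, mul_one, Real.norm_eq_abs, abs_of_pos hr.1]
    refine ⟨?_, by simpa only [Set.mem_setOf_eq, hnx] using hr⟩
    have : qmap n (r • (θ : EuclideanSpace ℝ (Fin n))) = θ := by
      simp only [qmap, hnx]
      rw [smul_smul, inv_mul_cancel₀ (ne_of_gt hr.1), one_smul]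
    simp only [Set.mem_preimage, this]
    exact ⟨θ, hθ, rfl⟩
  · rintro ⟨hq, hx⟩
    obtain ⟨θ, hθ, hv⟩ := hq
    refine ⟨‖x‖, hx, (θ : EuclideanSpace ℝ (Fin n)), ⟨θ, hθ, rfl⟩, ?_⟩
    rw [hv]
    simp only [qmap, smul_smul]
    rw [mul_inv_cancel₀ (ne_of_gt hx.1), one_smul]

lemma cone_measurable {s : Set (unitSphere n)} (hs : MeasurableSet s) :
    MeasurableSet (Ioo (0:ℝ) 1 • (Subtype.val '' s) : Set (EuclideanSpace ℝ (Fin n))) := by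
  rw [cone_eq]
  exact (qmap_measurable ((MeasurableEmbedding.subtype_coe
    Metric.isClosed_sphere.measurableSet).measurableSet_image.2 hs)).inter
    (measurable_norm (measurableSet_Ioo))

/-- rotation of the sphere induced by a linear isometry equivalence -/
def rotMap (ρ : EuclideanSpace ℝ (Fin n) ≃ₗᵢ[ℝ] EuclideanSpace ℝ (Fin n)) :
    unitSphere n → unitSphere n :=
  fun θ => ⟨ρ (θ : EuclideanSpace ℝ (Fin n)), by
    rw [mem_sphere_iff_norm, sub_zero, ρ.norm_map]; exact norm_coe θ⟩

lemma rotMap_measurable (ρ : EuclideanSpace ℝ (Fin n) ≃ₗᵢ[ℝ] EuclideanSpace ℝ (Fin n)) :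
    Measurable (rotMap ρ) :=
  ((ρ.continuous.comp continuous_subtype_val).subtype_mk _).measurable

lemma val_image_rotMap_preimage (ρ : EuclideanSpace ℝ (Fin n) ≃ₗᵢ[ℝ] EuclideanSpace ℝ (Fin n))
    (s : Set (unitSphere n)) :
    Subtype.val '' (rotMap ρ ⁻¹' s) = ⇑ρ ⁻¹' (Subtype.val '' s) := by
  ext x
  constructor
  · rintro ⟨θ, hθ, rfl⟩
    exact ⟨rotMap ρ θ, hθ, rfl⟩
  · rintro ⟨y, hy, hxy⟩
    have hx : x ∈ Metric.sphere (0 : EuclideanSpace ℝ (Fin n)) 1 := by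
      rw [mem_sphere_iff_norm, sub_zero, ← ρ.norm_map, ← hxy]
      exact norm_coe y
    refine ⟨⟨x, hx⟩, ?_, rfl⟩
    have : rotMap ρ ⟨x, hx⟩ = y := Subtype.ext hxy.symm
    rw [Set.mem_preimage, this]; exact hy

lemma cone_rot (ρ : EuclideanSpace ℝ (Fin n) ≃ₗᵢ[ℝ] EuclideanSpace ℝ (Fin n))
    (M : Set (EuclideanSpace ℝ (Fin n))) :
    (Ioo (0:ℝ) 1 • (⇑ρ ⁻¹' M) : Set (EuclideanSpace ℝ (Fin n))) = ⇑ρ ⁻¹' (Ioo (0:ℝ) 1 • M) := by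
  ext x
  constructor
  · rintro ⟨r, hr, y, hy, rfl⟩
    exact ⟨r, hr, ρ y, hy, (ρ.toLinearEquiv.map_smul r y).symm⟩
  · rintro ⟨r, hr, y, hy, hxy⟩
    refine ⟨r, hr, ρ.symm y, by simpa using hy, ?_⟩
    apply ρ.injective
    rw [show ρ (r • ρ.symm y) = r • ρ (ρ.symm y) from ρ.toLinearEquiv.map_smul r _]
    simpa using hxy

lemma rotMap_measurePreserving (ρ : EuclideanSpace ℝ (Fin n) ≃ₗᵢ[ℝ] EuclideanSpace ℝ (Fin n)) :
    MeasurePreserving (rotMap ρ) (sphereMeasure n) (sphereMeasure n) := by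
  refine ⟨rotMap_measurable ρ, ?_⟩
  apply Measure.ext
  intro s hs
  rw [Measure.map_apply (rotMap_measurable ρ) hs]
  have hpre : MeasurableSet (rotMap ρ ⁻¹' s) := rotMap_measurable ρ hs
  rw [sphereMeasure, Measure.toSphere_apply' _ hpre, Measure.toSphere_apply' _ hs]
  congr 1
  rw [val_image_rotMap_preimage, cone_rot]
  exact (ρ.measurePreserving.measure_preimage
    (cone_measurable hs).nullMeasurableSet)

end L1A


namespace L1A
open scoped Pointwise ENNReal NNReal
variable {n : ℕ}

lemma cone_two_smul (M : Set (EuclideanSpace ℝ (Fin n))) :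
    (Ioo (0:ℝ) 2 • M : Set (EuclideanSpace ℝ (Fin n))) = (2:ℝ) • (Ioo (0:ℝ) 1 • M) := by
  ext x
  constructor
  · rintro ⟨r, hr, y, hy, rfl⟩
    refine ⟨(r/2) • y, ⟨r/2, ⟨by linarith [hr.1], by linarith [hr.2]⟩, y, hy, rfl⟩, ?_⟩
    show (2:ℝ) • ((r/2) • y) = r • y
    rw [smul_smul]; congr 1; ring
  · rintro ⟨-, ⟨r, hr, y, hy, rfl⟩, rfl⟩
    refine ⟨2*r, ⟨by linarith [hr.1], by linarith [hr.2]⟩, y, hy, ?_⟩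
    show (2*r) • y = (2:ℝ) • (r • y)
    rw [smul_smul]

/-- The Key geometric lemma: pushing forward the sphere measure under a small
"translation-projection" multiplies it by at most `2^(n+1)`. -/
lemma exists_good_radius (hn : 0 < n) :
    ∃ r₀ : ℝ, 0 < r₀ ∧ r₀ ≤ 2⁻¹ ∧ ∀ h : EuclideanSpace ℝ (Fin n), ‖h‖ ≤ r₀ →
      Measure.map (fun θ : unitSphere n => sproj hn ((θ : EuclideanSpace ℝ (Fin n)) + h))
          (sphereMeasure n) ≤ ((2:ℝ≥0∞) ^ (n+1)) • sphereMeasure n := by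
  classical
  -- get the approximating-linear-map volume bound
  have hdet : ((2⁻¹ : ℝ≥0) : ℝ≥0∞) < ENNReal.ofReal |(ContinuousLinearMap.id ℝ
      (EuclideanSpace ℝ (Fin n))).det| := by
    simp [ContinuousLinearMap.det]
  have hev := MeasureTheory.mul_le_addHaar_image_of_lt_det
    (μ := (volume : Measure (EuclideanSpace ℝ (Fin n))))
    (ContinuousLinearMap.id ℝ (EuclideanSpace ℝ (Fin n))) hdet
  rw [Filter.eventually_iff, mem_nhdsGT_iff_exists_Ioo_subset] at hev
  obtain ⟨u, hu, hsub⟩ := hev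
  set δ' : ℝ≥0 := min (u/2) 2⁻¹ with hδ'
  have hupos : 0 < u := mem_Ioi.mp hu
  have hδ'pos : 0 < δ' := lt_min (by exact half_pos hupos) (by norm_num)
  have hδ'mem : δ' ∈ Ioo (0:ℝ≥0) u := ⟨hδ'pos, lt_of_le_of_lt (min_le_left _ _)
    (NNReal.half_lt_self (ne_of_gt hu))⟩
  have hkey := hsub hδ'mem
  refine ⟨δ', hδ'pos, ?_, ?_⟩
  · exact_mod_cast min_le_right (u/2) 2⁻¹
  intro h hh
  have hh1 : ‖h‖ < 1 := lt_of_le_of_lt (le_trans hh (by exact_mod_cast min_le_right (u/2) 2⁻¹))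
    (by norm_num)
  -- the expanding map
  set Φ : EuclideanSpace ℝ (Fin n) → EuclideanSpace ℝ (Fin n) := fun x => x + ‖x‖ • h with hΦ
  have happrox : ApproximatesLinearOn Φ (ContinuousLinearMap.id ℝ (EuclideanSpace ℝ (Fin n)))
      Set.univ δ' := by
    intro x _ y _
    have : Φ x - Φ y - (ContinuousLinearMap.id ℝ _) (x - y) = (‖x‖ - ‖y‖) • h := by
      simp only [hΦ, ContinuousLinearMap.id_apply, sub_smul]
      abel
    rw [this, norm_smul, Real.norm_eq_abs]
    calc |‖x‖ - ‖y‖| * ‖h‖ ≤ ‖x - y‖ * ‖h‖ :=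
          mul_le_mul_of_nonneg_right (abs_norm_sub_norm_le x y) (norm_nonneg h)
      _ ≤ ‖h‖ * ‖x - y‖ := by rw [mul_comm]
      _ ≤ (δ' : ℝ) * ‖x - y‖ := mul_le_mul_of_nonneg_right hh (norm_nonneg _)
  have hvol : ∀ K : Set (EuclideanSpace ℝ (Fin n)),
      volume K ≤ 2 * volume (Φ '' K) := by
    intro K
    have := hkey K Φ (happrox.mono_set (Set.subset_univ K))
    have h21 : (2:ℝ≥0∞) * ((2⁻¹:ℝ≥0) : ℝ≥0∞) = 1 := by
      rw [show ((2⁻¹:ℝ≥0) : ℝ≥0∞) = (2:ℝ≥0∞)⁻¹ by simp]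
      exact ENNReal.mul_inv_cancel (by norm_num) (by norm_num)
    calc volume K = 2 * (((2⁻¹:ℝ≥0) : ℝ≥0∞) * volume K) := by
          rw [← mul_assoc, h21, one_mul]
      _ ≤ 2 * volume (Φ '' K) := by
          exact mul_le_mul_right this 2
  -- now compare the sphere measures
  rw [Measure.le_iff]
  intro s hs
  have hUmeas : Measurable (fun θ : unitSphere n =>
      sproj hn ((θ : EuclideanSpace ℝ (Fin n)) + h)) :=
    (sproj_measurable hn).comp (measurable_subtype_coe.add_const h)
  rw [Measure.map_apply hUmeas hs, Measure.smul_apply]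
  set U := fun θ : unitSphere n => sproj hn ((θ : EuclideanSpace ℝ (Fin n)) + h) with hU
  rw [sphereMeasure, Measure.toSphere_apply' _ (hUmeas hs), Measure.toSphere_apply' _ hs]
  -- key set inclusion
  have himg : Φ '' (Ioo (0:ℝ) 1 • (Subtype.val '' (U ⁻¹' s))) ⊆
      Ioo (0:ℝ) 2 • (Subtype.val '' s) := by
    rintro - ⟨-, ⟨r, hr, -, ⟨θ, hθ, rfl⟩, rfl⟩, rfl⟩
    have hne : (θ : EuclideanSpace ℝ (Fin n)) + h ≠ 0 := by
      intro h0
      have h0' : (θ : EuclideanSpace ℝ (Fin n)) = -h := add_eq_zero_iff_eq_neg.mp h0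
      have h1 : (1:ℝ) = ‖h‖ := by rw [← norm_coe θ, h0', norm_neg]
      linarith
    have hΦval : Φ (r • (θ : EuclideanSpace ℝ (Fin n))) =
        (r * ‖(θ : EuclideanSpace ℝ (Fin n)) + h‖) • (U θ : EuclideanSpace ℝ (Fin n)) := by
      have hnr : ‖r • (θ : EuclideanSpace ℝ (Fin n))‖ = r := by
        rw [norm_smul, norm_coe θ, mul_one, Real.norm_eq_abs, abs_of_pos hr.1]
      simp only [hΦ, hnr]
      rw [hU]
      rw [mul_smul, smul_sproj hn hne, ← smul_add]
    rw [hΦval]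
    refine ⟨r * ‖(θ : EuclideanSpace ℝ (Fin n)) + h‖, ⟨?_, ?_⟩, (U θ : EuclideanSpace ℝ (Fin n)),
      ⟨U θ, hθ, rfl⟩, rfl⟩
    · have : 0 < ‖(θ : EuclideanSpace ℝ (Fin n)) + h‖ := norm_pos_iff.2 hne
      exact mul_pos hr.1 this
    · have hb : ‖(θ : EuclideanSpace ℝ (Fin n)) + h‖ ≤ 2 := by
        calc ‖(θ : EuclideanSpace ℝ (Fin n)) + h‖ ≤ ‖(θ : EuclideanSpace ℝ (Fin n))‖ + ‖h‖ :=
              norm_add_le _ _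
          _ ≤ 1 + 1 := by rw [norm_coe θ]; linarith
          _ = 2 := by norm_num
      nlinarith [hr.1, hr.2]
  calc (↑(Module.finrank ℝ (EuclideanSpace ℝ (Fin n))) : ℝ≥0∞) *
        volume (Ioo (0:ℝ) 1 • (Subtype.val '' (U ⁻¹' s)))
      ≤ ↑(Module.finrank ℝ (EuclideanSpace ℝ (Fin n))) *
        (2 * volume (Φ '' (Ioo (0:ℝ) 1 • (Subtype.val '' (U ⁻¹' s))))) := by
        exact mul_le_mul_right (hvol _) _
    _ ≤ ↑(Module.finrank ℝ (EuclideanSpace ℝ (Fin n))) *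
        (2 * volume (Ioo (0:ℝ) 2 • (Subtype.val '' s))) := by
        exact mul_le_mul_right (mul_le_mul_right (measure_mono himg) _) _
    _ = (2:ℝ≥0∞)^(n+1) * (↑(Module.finrank ℝ (EuclideanSpace ℝ (Fin n))) *
        volume (Ioo (0:ℝ) 1 • (Subtype.val '' s))) := by
        rw [cone_two_smul, Measure.addHaar_smul_of_nonneg _ (by norm_num : (0:ℝ) ≤ 2)]
        rw [finrank_euclideanSpace_fin]
        have h2 : ENNReal.ofReal ((2:ℝ)^n) = (2:ℝ≥0∞)^n := by
          rw [ENNReal.ofReal_pow (by norm_num)]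
          norm_num
        rw [h2, pow_succ]
        ring
end L1A


namespace L1A
open scoped Pointwise ENNReal NNReal

variable {n : ℕ}

lemma add_ne_zero' (θ : unitSphere n) {h : EuclideanSpace ℝ (Fin n)} (hh : ‖h‖ < 1) :
    (θ : EuclideanSpace ℝ (Fin n)) + h ≠ 0 := by
  intro h0
  have h0' : (θ : EuclideanSpace ℝ (Fin n)) = -h := add_eq_zero_iff_eq_neg.mp h0
  have h1 : (1:ℝ) = ‖h‖ := by rw [← norm_coe θ, h0', norm_neg]
  linarith

lemma omega_add {Ω : EuclideanSpace ℝ (Fin n) → ℝ} (hhom : HomogeneousZero Ω) (hn : 0 < n)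
    (θ : unitSphere n) {h : EuclideanSpace ℝ (Fin n)} (hh : ‖h‖ < 1) :
    Ω ((θ : EuclideanSpace ℝ (Fin n)) + h) =
      Ω ((sproj hn ((θ : EuclideanSpace ℝ (Fin n)) + h) : EuclideanSpace ℝ (Fin n))) := by
  have hne := add_ne_zero' θ hh
  have h1 := smul_sproj hn hne
  calc Ω ((θ : EuclideanSpace ℝ (Fin n)) + h)
      = Ω (‖(θ : EuclideanSpace ℝ (Fin n)) + h‖ •
          (sproj hn ((θ : EuclideanSpace ℝ (Fin n)) + h) : EuclideanSpace ℝ (Fin n))) := by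
        rw [h1]
    _ = Ω ((sproj hn ((θ : EuclideanSpace ℝ (Fin n)) + h) : EuclideanSpace ℝ (Fin n))) :=
        hhom _ (norm_pos_iff.2 hne) _ (coe_ne_zero _)

lemma smul_sigma_ac {c : ℝ≥0∞} : c • sphereMeasure n ≪ sphereMeasure n := by
  refine Measure.AbsolutelyContinuous.mk fun s _ hs0 => ?_
  rw [Measure.smul_apply, hs0]; simp

/-- quasi-measure-preserving from a domination of the pushforward -/
lemma qmp_of_map_le {U : unitSphere n → unitSphere n} (hU : Measurable U) {c : ℝ≥0∞}
    (hmap : Measure.map U (sphereMeasure n) ≤ c • sphereMeasure n) :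
    Measure.QuasiMeasurePreserving U (sphereMeasure n) (sphereMeasure n) :=
  ⟨hU, (Measure.absolutelyContinuous_of_le hmap).trans smul_sigma_ac⟩

lemma integrable_comp_of_map_le {Ω : EuclideanSpace ℝ (Fin n) → ℝ}
    (hint : Integrable (fun θ : unitSphere n => Ω (θ : EuclideanSpace ℝ (Fin n)))
      (sphereMeasure n))
    {U : unitSphere n → unitSphere n} (hU : Measurable U) {c : ℝ≥0∞} (hc : c ≠ ⊤)
    (hmap : Measure.map U (sphereMeasure n) ≤ c • sphereMeasure n) :
    Integrable (fun θ : unitSphere n => Ω ((U θ : EuclideanSpace ℝ (Fin n))))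
      (sphereMeasure n) := by
  have haesm : AEStronglyMeasurable
      ((fun θ : unitSphere n => Ω (θ : EuclideanSpace ℝ (Fin n))) ∘ U) (sphereMeasure n) :=
    hint.aestronglyMeasurable.comp_quasiMeasurePreserving (qmp_of_map_le hU hmap)
  refine ⟨haesm, ?_⟩
  simp only [HasFiniteIntegral]
  have hae : AEMeasurable (fun θ : unitSphere n => (‖Ω (θ : EuclideanSpace ℝ (Fin n))‖₊ : ℝ≥0∞))
      (Measure.map U (sphereMeasure n)) :=
    (hint.aestronglyMeasurable.enorm).mono_ac
      ((Measure.absolutelyContinuous_of_le hmap).trans smul_sigma_ac)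
  calc ∫⁻ θ, (‖Ω ((U θ : EuclideanSpace ℝ (Fin n)))‖₊ : ℝ≥0∞) ∂(sphereMeasure n)
      = ∫⁻ θ, (‖Ω ((θ : EuclideanSpace ℝ (Fin n)))‖₊ : ℝ≥0∞)
          ∂(Measure.map U (sphereMeasure n)) :=
        (lintegral_map' hae hU.aemeasurable).symm
    _ ≤ ∫⁻ θ, (‖Ω ((θ : EuclideanSpace ℝ (Fin n)))‖₊ : ℝ≥0∞) ∂(c • sphereMeasure n) :=
        lintegral_mono' hmap le_rfl
    _ = c * ∫⁻ θ, (‖Ω ((θ : EuclideanSpace ℝ (Fin n)))‖₊ : ℝ≥0∞) ∂(sphereMeasure n) :=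
        lintegral_smul_measure c _
    _ < ⊤ := ENNReal.mul_lt_top hc.lt_top (by
        have := hint.hasFiniteIntegral
        simpa only [HasFiniteIntegral, enorm_eq_nnnorm] using this)

end L1A


namespace L1A
open scoped Pointwise ENNReal NNReal

variable {n : ℕ}

instance : IsFiniteMeasure (sphereMeasure n) := by
  unfold sphereMeasure; infer_instance

lemma exists_measurable_version {Ω : EuclideanSpace ℝ (Fin n) → ℝ}
    (hint : Integrable (fun θ : unitSphere n => Ω (θ : EuclideanSpace ℝ (Fin n)))
      (sphereMeasure n)) :
    ∃ g : unitSphere n → ℝ, Measurable g ∧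
      ∃ N : Set (unitSphere n), MeasurableSet N ∧ sphereMeasure n N = 0 ∧
        ∀ θ ∉ N, Ω (θ : EuclideanSpace ℝ (Fin n)) = g θ := by
  obtain ⟨g, hgm, hg⟩ := hint.aestronglyMeasurable.aemeasurable
  refine ⟨g, hgm, toMeasurable (sphereMeasure n)
    {θ | Ω (θ : EuclideanSpace ℝ (Fin n)) ≠ g θ}, measurableSet_toMeasurable _ _, ?_, ?_⟩
  · rw [measure_toMeasurable]
    exact hg
  · intro θ hθ
    by_contra hne
    exact hθ (subset_toMeasurable _ _ hne)

lemma preimage_null_of_map_le {h : EuclideanSpace ℝ (Fin n)} (hn : 0 < n) {c : ℝ≥0∞}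
    (hmap : Measure.map (fun θ : unitSphere n =>
        sproj hn ((θ : EuclideanSpace ℝ (Fin n)) + h)) (sphereMeasure n) ≤
      c • sphereMeasure n)
    {N : Set (unitSphere n)} (hNm : MeasurableSet N) (hN0 : sphereMeasure n N = 0) :
    sphereMeasure n ((fun θ : unitSphere n =>
      sproj hn ((θ : EuclideanSpace ℝ (Fin n)) + h)) ⁻¹' N) = 0 := by
  have hUm : Measurable (fun θ : unitSphere n =>
      sproj hn ((θ : EuclideanSpace ℝ (Fin n)) + h)) :=
    (sproj_measurable hn).comp (measurable_subtype_coe.add_const h)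
  have h1 : sphereMeasure n ((fun θ : unitSphere n =>
      sproj hn ((θ : EuclideanSpace ℝ (Fin n)) + h)) ⁻¹' N) =
      Measure.map (fun θ : unitSphere n =>
        sproj hn ((θ : EuclideanSpace ℝ (Fin n)) + h)) (sphereMeasure n) N :=
    (Measure.map_apply hUm hNm).symm
  rw [h1]
  refine le_antisymm ?_ zero_le
  calc Measure.map (fun θ : unitSphere n =>
        sproj hn ((θ : EuclideanSpace ℝ (Fin n)) + h)) (sphereMeasure n) N
      ≤ (c • sphereMeasure n) N := hmap N
    _ = c * sphereMeasure n N := Measure.smul_apply _ _ _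
    _ = 0 := by rw [hN0, mul_zero]

lemma single_aemeas {Ω : EuclideanSpace ℝ (Fin n) → ℝ} (hhom : HomogeneousZero Ω) (hn : 0 < n)
    (hint : Integrable (fun θ : unitSphere n => Ω (θ : EuclideanSpace ℝ (Fin n)))
      (sphereMeasure n))
    {h : EuclideanSpace ℝ (Fin n)} (hh1 : ‖h‖ < 1) {c : ℝ≥0∞}
    (hmap : Measure.map (fun θ : unitSphere n =>
        sproj hn ((θ : EuclideanSpace ℝ (Fin n)) + h)) (sphereMeasure n) ≤
      c • sphereMeasure n) :
    AEMeasurable (fun θ : unitSphere n =>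
      ENNReal.ofReal |Ω (θ : EuclideanSpace ℝ (Fin n)) -
        Ω ((θ : EuclideanSpace ℝ (Fin n)) + h)|) (sphereMeasure n) := by
  obtain ⟨g, hgm, N, hNm, hN0, hN⟩ := exists_measurable_version hint
  set U := fun θ : unitSphere n => sproj hn ((θ : EuclideanSpace ℝ (Fin n)) + h) with hU
  have hUm : Measurable U := (sproj_measurable hn).comp (measurable_subtype_coe.add_const h)
  have hF'm : Measurable (fun θ : unitSphere n => ENNReal.ofReal |g θ - g (U θ)|) :=
    (ENNReal.measurable_ofReal.comp ((hgm.sub (hgm.comp hUm)).abs))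
  refine (hF'm.aemeasurable).congr ?_
  have hnull : sphereMeasure n (N ∪ U ⁻¹' N) = 0 :=
    measure_union_null hN0 (preimage_null_of_map_le hn hmap hNm hN0)
  rw [Filter.EventuallyEq, ae_iff]
  refine measure_mono_null ?_ hnull
  intro θ hθ
  simp only [Set.mem_setOf_eq] at hθ
  by_contra hmem
  simp only [Set.mem_union, not_or] at hmem
  apply hθ
  rw [← hN θ hmem.1, omega_add hhom hn θ hh1, hN (U θ) hmem.2]

lemma trans_bound {Ω : EuclideanSpace ℝ (Fin n) → ℝ} (hhom : HomogeneousZero Ω) (hn : 0 < n)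
    (hint : Integrable (fun θ : unitSphere n => Ω (θ : EuclideanSpace ℝ (Fin n)))
      (sphereMeasure n)) (C : ℝ)
    (hreg : ∀ δ : ℝ, 0 < δ → δ < 1 / n →
      ∀ ξ : EuclideanSpace ℝ (Fin n), ‖ξ‖ = 1 →
        (∫ θ : unitSphere n,
            |Ω (θ : EuclideanSpace ℝ (Fin n)) - Ω ((θ : EuclideanSpace ℝ (Fin n)) + δ • ξ)|
            ∂(sphereMeasure n)) ≤
          C * n * δ *
            ∫ θ : unitSphere n, |Ω (θ : EuclideanSpace ℝ (Fin n))| ∂(sphereMeasure n))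
    {h : EuclideanSpace ℝ (Fin n)} (hh1 : ‖h‖ < 1) (hhn : ‖h‖ < 1 / n) {c : ℝ≥0∞}
    (hc : c ≠ ⊤)
    (hmap : Measure.map (fun θ : unitSphere n =>
        sproj hn ((θ : EuclideanSpace ℝ (Fin n)) + h)) (sphereMeasure n) ≤
      c • sphereMeasure n) :
    ∫⁻ θ : unitSphere n, ENNReal.ofReal |Ω (θ : EuclideanSpace ℝ (Fin n)) -
        Ω ((θ : EuclideanSpace ℝ (Fin n)) + h)| ∂(sphereMeasure n) ≤
      ENNReal.ofReal (C * n * ‖h‖ *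
        ∫ θ : unitSphere n, |Ω (θ : EuclideanSpace ℝ (Fin n))| ∂(sphereMeasure n)) := by
  rcases eq_or_ne h 0 with rfl | hne
  · have : ∀ θ : unitSphere n, ENNReal.ofReal |Ω (θ : EuclideanSpace ℝ (Fin n)) -
        Ω ((θ : EuclideanSpace ℝ (Fin n)) + 0)| = 0 := by
      intro θ; simp
    simp only [this, lintegral_zero]
    exact zero_le
  -- h ≠ 0
  have hpos : 0 < ‖h‖ := norm_pos_iff.2 hne
  have hUm : Measurable (fun θ : unitSphere n =>
      sproj hn ((θ : EuclideanSpace ℝ (Fin n)) + h)) :=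
    (sproj_measurable hn).comp (measurable_subtype_coe.add_const h)
  have hint2 : Integrable (fun θ : unitSphere n =>
      Ω ((θ : EuclideanSpace ℝ (Fin n)) + h)) (sphereMeasure n) := by
    have heq : (fun θ : unitSphere n => Ω ((θ : EuclideanSpace ℝ (Fin n)) + h)) =
        (fun θ : unitSphere n => Ω ((sproj hn ((θ : EuclideanSpace ℝ (Fin n)) + h) :
          EuclideanSpace ℝ (Fin n)))) :=
      funext fun θ => omega_add hhom hn θ hh1
    rw [heq]
    exact integrable_comp_of_map_le hint hUm hc hmap
  have hintabs : Integrable (fun θ : unitSphere n =>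
      |Ω (θ : EuclideanSpace ℝ (Fin n)) - Ω ((θ : EuclideanSpace ℝ (Fin n)) + h)|)
      (sphereMeasure n) := (hint.sub hint2).abs
  rw [← ofReal_integral_eq_lintegral_ofReal hintabs
    (Filter.Eventually.of_forall fun θ => abs_nonneg _)]
  apply ENNReal.ofReal_le_ofReal
  have hξ : ‖(‖h‖⁻¹ • h : EuclideanSpace ℝ (Fin n))‖ = 1 := by
    rw [norm_smul, norm_inv, norm_norm, inv_mul_cancel₀ (ne_of_gt hpos)]
  have hrec := hreg ‖h‖ hpos hhn (‖h‖⁻¹ • h) hξ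
  rwa [smul_smul, mul_inv_cancel₀ (ne_of_gt hpos), one_smul] at hrec

end L1A


namespace L1A
open scoped Pointwise ENNReal NNReal

variable {n : ℕ}

/-- Joint a.e.-measurability of `(θ, h) ↦ |Ω(Vθ) − Ω(V'θ + h)|` on `σ ⊗ vol|_B`. -/
lemma joint_aemeas {Ω : EuclideanSpace ℝ (Fin n) → ℝ} (hhom : HomogeneousZero Ω) (hn : 0 < n)
    (hint : Integrable (fun θ : unitSphere n => Ω (θ : EuclideanSpace ℝ (Fin n)))
      (sphereMeasure n))
    {B : Set (EuclideanSpace ℝ (Fin n))} (hB : MeasurableSet B)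
    (hB1 : ∀ h ∈ B, ‖h‖ < 1) {c : ℝ≥0∞}
    (hmapB : ∀ h ∈ B, Measure.map (fun θ : unitSphere n =>
        sproj hn ((θ : EuclideanSpace ℝ (Fin n)) + h)) (sphereMeasure n) ≤
      c • sphereMeasure n)
    (V V' : unitSphere n → unitSphere n)
    (hV : MeasurePreserving V (sphereMeasure n) (sphereMeasure n))
    (hV' : MeasurePreserving V' (sphereMeasure n) (sphereMeasure n)) :
    AEMeasurable (fun p : unitSphere n × EuclideanSpace ℝ (Fin n) =>
      ENNReal.ofReal |Ω ((V p.1 : EuclideanSpace ℝ (Fin n))) -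
        Ω ((V' p.1 : EuclideanSpace ℝ (Fin n)) + p.2)|)
      ((sphereMeasure n).prod (volume.restrict B)) := by
  obtain ⟨g, hgm, N, hNm, hN0, hN⟩ := exists_measurable_version hint
  set G : EuclideanSpace ℝ (Fin n) → ℝ := fun x => g (sproj hn x) with hG
  have hGm : Measurable G := hgm.comp (sproj_measurable hn)
  -- the measurable comparison function
  set F' : unitSphere n × EuclideanSpace ℝ (Fin n) → ℝ≥0∞ := fun p =>
    ENNReal.ofReal |g (V p.1) - G ((V' p.1 : EuclideanSpace ℝ (Fin n)) + p.2)| with hF'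
  have hvalV' : Measurable (fun p : unitSphere n × EuclideanSpace ℝ (Fin n) =>
      (V' p.1 : EuclideanSpace ℝ (Fin n)) + p.2) :=
    ((measurable_subtype_coe.comp hV'.measurable).comp measurable_fst).add measurable_snd
  have hF'm : Measurable F' :=
    ENNReal.measurable_ofReal.comp (((hgm.comp (hV.measurable.comp measurable_fst)).sub
      (hGm.comp hvalV')).abs)
  refine (hF'm.aemeasurable).congr ?_
  -- the bad sets
  set Z1 : Set (unitSphere n × EuclideanSpace ℝ (Fin n)) := {p | V p.1 ∈ N} with hZ1
  set Z2 : Set (unitSphere n × EuclideanSpace ℝ (Fin n)) :=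
    {p | sproj hn ((V' p.1 : EuclideanSpace ℝ (Fin n)) + p.2) ∈ N} with hZ2
  set Z3 : Set (unitSphere n × EuclideanSpace ℝ (Fin n)) := {p | p.2 ∉ B} with hZ3
  have hZ1null : ((sphereMeasure n).prod (volume.restrict B)) Z1 = 0 := by
    have : Z1 = (V ⁻¹' N) ×ˢ (Set.univ : Set (EuclideanSpace ℝ (Fin n))) := by
      ext p; simp [hZ1]
    rw [this, Measure.prod_prod, hV.measure_preimage hNm.nullMeasurableSet, hN0, zero_mul]
  have hZ2m : MeasurableSet Z2 := ((sproj_measurable hn).comp hvalV') hNm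
  have hZ2null : ((sphereMeasure n).prod (volume.restrict B)) Z2 = 0 := by
    rw [Measure.prod_apply_symm hZ2m]
    have hin : ∀ h ∈ B, (sphereMeasure n) ((fun θ => (θ, h)) ⁻¹' Z2) = 0 := by
      intro h hh
      have hset : ((fun θ : unitSphere n => (θ, h)) ⁻¹' Z2) =
          V' ⁻¹' ((fun θ : unitSphere n =>
            sproj hn ((θ : EuclideanSpace ℝ (Fin n)) + h)) ⁻¹' N) := by
        ext θ; simp [hZ2]
      rw [hset, hV'.measure_preimage]
      · exact preimage_null_of_map_le hn (hmapB h hh) hNm hN0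
      · exact (((sproj_measurable hn).comp (measurable_subtype_coe.add_const h)) hNm).nullMeasurableSet
    calc ∫⁻ h, (sphereMeasure n) ((fun θ => (θ, h)) ⁻¹' Z2) ∂(volume.restrict B)
        = ∫⁻ h, 0 ∂(volume.restrict B) := by
          apply lintegral_congr_ae
          filter_upwards [ae_restrict_mem hB] with h hh
          exact hin h hh
      _ = 0 := lintegral_zero
  have hZ3null : ((sphereMeasure n).prod (volume.restrict B)) Z3 = 0 := by
    have : Z3 = (Set.univ : Set (unitSphere n)) ×ˢ Bᶜ := by
      ext p; simp [hZ3]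
    rw [this, Measure.prod_prod, Measure.restrict_apply hB.compl]
    simp
  rw [Filter.EventuallyEq, ae_iff]
  refine measure_mono_null ?_ (measure_union_null (measure_union_null hZ1null hZ2null) hZ3null)
  intro p hp
  simp only [Set.mem_setOf_eq] at hp
  by_contra hmem
  simp only [Set.mem_union, not_or] at hmem
  obtain ⟨⟨h1, h2⟩, h3⟩ := hmem
  apply hp
  simp only [hZ3, Set.mem_setOf_eq, not_not] at h3
  have hh1 : ‖p.2‖ < 1 := hB1 p.2 h3
  show ENNReal.ofReal |g (V p.1) - G ((V' p.1 : EuclideanSpace ℝ (Fin n)) + p.2)| =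
    ENNReal.ofReal |Ω ((V p.1 : EuclideanSpace ℝ (Fin n))) -
      Ω ((V' p.1 : EuclideanSpace ℝ (Fin n)) + p.2)|
  congr 1
  rw [← hN (V p.1) h1, omega_add hhom hn (V' p.1) hh1, hN _ h2]

/-- rotation invariance of the translated modulus integrand -/
lemma rot_step {Ω : EuclideanSpace ℝ (Fin n) → ℝ} (hhom : HomogeneousZero Ω) (hn : 0 < n)
    (hint : Integrable (fun θ : unitSphere n => Ω (θ : EuclideanSpace ℝ (Fin n)))
      (sphereMeasure n))
    {h : EuclideanSpace ℝ (Fin n)} (hh1 : ‖h‖ < 1) {c : ℝ≥0∞}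
    (hmap : Measure.map (fun θ : unitSphere n =>
        sproj hn ((θ : EuclideanSpace ℝ (Fin n)) + h)) (sphereMeasure n) ≤
      c • sphereMeasure n)
    (ρ : EuclideanSpace ℝ (Fin n) ≃ₗᵢ[ℝ] EuclideanSpace ℝ (Fin n)) :
    ∫⁻ θ : unitSphere n, ENNReal.ofReal |Ω (ρ (θ : EuclideanSpace ℝ (Fin n))) -
        Ω (ρ (θ : EuclideanSpace ℝ (Fin n)) + h)| ∂(sphereMeasure n) =
    ∫⁻ θ : unitSphere n, ENNReal.ofReal |Ω (θ : EuclideanSpace ℝ (Fin n)) -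
        Ω ((θ : EuclideanSpace ℝ (Fin n)) + h)| ∂(sphereMeasure n) := by
  have haem : AEMeasurable (fun θ : unitSphere n =>
      ENNReal.ofReal |Ω (θ : EuclideanSpace ℝ (Fin n)) -
        Ω ((θ : EuclideanSpace ℝ (Fin n)) + h)|)
      (Measure.map (rotMap ρ) (sphereMeasure n)) := by
    rw [(rotMap_measurePreserving ρ).map_eq]
    exact single_aemeas hhom hn hint hh1 hmap
  have := lintegral_map' haem (rotMap_measurable ρ).aemeasurable
  rw [(rotMap_measurePreserving ρ).map_eq] at this
  exact this.symm

end L1A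


namespace L1A
open scoped Pointwise ENNReal NNReal
open Metric

variable {n : ℕ}

lemma rotation_estimate {Ω : EuclideanSpace ℝ (Fin n) → ℝ} (hhom : HomogeneousZero Ω)
    (hn : 0 < n)
    (hint : Integrable (fun θ : unitSphere n => Ω (θ : EuclideanSpace ℝ (Fin n)))
      (sphereMeasure n)) (C : ℝ)
    (hreg : ∀ δ : ℝ, 0 < δ → δ < 1 / n →
      ∀ ξ : EuclideanSpace ℝ (Fin n), ‖ξ‖ = 1 →
        (∫ θ : unitSphere n,
            |Ω (θ : EuclideanSpace ℝ (Fin n)) - Ω ((θ : EuclideanSpace ℝ (Fin n)) + δ • ξ)|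
            ∂(sphereMeasure n)) ≤
          C * n * δ *
            ∫ θ : unitSphere n, |Ω (θ : EuclideanSpace ℝ (Fin n))| ∂(sphereMeasure n))
    {r₀ : ℝ} (hr₀pos : 0 < r₀) (hr₀half : r₀ ≤ 2⁻¹)
    (hmapAll : ∀ h : EuclideanSpace ℝ (Fin n), ‖h‖ ≤ r₀ →
      Measure.map (fun θ : unitSphere n => sproj hn ((θ : EuclideanSpace ℝ (Fin n)) + h))
          (sphereMeasure n) ≤ ((2:ℝ≥0∞) ^ (n+1)) • sphereMeasure n)
    (hCA : 0 ≤ C * n * ∫ θ : unitSphere n, |Ω (θ : EuclideanSpace ℝ (Fin n))| ∂(sphereMeasure n))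
    {δ : ℝ} (hδpos : 0 < δ) (hδr : 2*δ ≤ r₀) (hδn : 2*δ < 1/n)
    (ρ : EuclideanSpace ℝ (Fin n) ≃ₗᵢ[ℝ] EuclideanSpace ℝ (Fin n))
    (hρ : ∀ x : EuclideanSpace ℝ (Fin n), ‖x‖ = 1 → ‖ρ x - x‖ ≤ δ) :
    (∫ θ : unitSphere n, |Ω (ρ (θ : EuclideanSpace ℝ (Fin n))) -
        Ω (θ : EuclideanSpace ℝ (Fin n))| ∂(sphereMeasure n)) ≤
      2^(n+2) * (C * n *
        (∫ θ : unitSphere n, |Ω (θ : EuclideanSpace ℝ (Fin n))| ∂(sphereMeasure n)) * δ) := by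
  set A := ∫ θ : unitSphere n, |Ω (θ : EuclideanSpace ℝ (Fin n))| ∂(sphereMeasure n) with hA
  set σ := sphereMeasure n with hσ
  set c : ℝ≥0∞ := (2:ℝ≥0∞) ^ (n+1) with hc
  have hctop : c ≠ ⊤ := by
    rw [hc]; exact (ENNReal.pow_ne_top (by norm_num))
  -- basic norms facts
  have hr₀1 : r₀ < 1 := lt_of_le_of_lt hr₀half (by norm_num)
  have h2δr₀ : ∀ h : EuclideanSpace ℝ (Fin n), ‖h‖ ≤ 2*δ → ‖h‖ ≤ r₀ :=
    fun h hh => le_trans hh hδr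
  have h2δ1 : ∀ h : EuclideanSpace ℝ (Fin n), ‖h‖ ≤ 2*δ → ‖h‖ < 1 :=
    fun h hh => lt_of_le_of_lt (le_trans hh hδr) hr₀1
  have h2δn : ∀ h : EuclideanSpace ℝ (Fin n), ‖h‖ ≤ 2*δ → ‖h‖ < 1/n :=
    fun h hh => lt_of_le_of_lt hh hδn
  -- the common bound for translations of size ≤ 2δ
  set J : ℝ≥0∞ := ENNReal.ofReal (C * n * (2*δ) * A) with hJ
  have hJbound : ∀ h : EuclideanSpace ℝ (Fin n), ‖h‖ ≤ 2*δ →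
      (∫⁻ θ : unitSphere n, ENNReal.ofReal |Ω (θ : EuclideanSpace ℝ (Fin n)) -
        Ω ((θ : EuclideanSpace ℝ (Fin n)) + h)| ∂σ) ≤ J := by
    intro h hh
    refine le_trans (trans_bound hhom hn hint C hreg (h2δ1 h hh) (h2δn h hh) hctop
      (hmapAll h (h2δr₀ h hh))) ?_
    apply ENNReal.ofReal_le_ofReal
    nlinarith [mul_nonneg hCA (sub_nonneg.2 hh)]
  -- the balls
  set B1 := Metric.closedBall (0 : EuclideanSpace ℝ (Fin n)) δ with hB1
  set B2 := Metric.closedBall (0 : EuclideanSpace ℝ (Fin n)) (2*δ) with hB2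
  have hB1m : MeasurableSet B1 := measurableSet_closedBall
  have hB2m : MeasurableSet B2 := measurableSet_closedBall
  have hB1norm : ∀ h ∈ B1, ‖h‖ ≤ δ := fun h hh => mem_closedBall_zero_iff.1 hh
  have hB2norm : ∀ h ∈ B2, ‖h‖ ≤ 2*δ := fun h hh => mem_closedBall_zero_iff.1 hh
  have hB1norm' : ∀ h ∈ B1, ‖h‖ ≤ 2*δ := fun h hh => by
    have := hB1norm h hh; linarith
  have hvB1pos : volume B1 ≠ 0 := (measure_closedBall_pos volume 0 hδpos).ne'
  have hvB1top : volume B1 ≠ ⊤ := measure_closedBall_lt_top.ne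
  -- the two integrands on the product space
  set P : unitSphere n × EuclideanSpace ℝ (Fin n) → ℝ≥0∞ := fun p =>
    ENNReal.ofReal |Ω ((rotMap ρ p.1 : EuclideanSpace ℝ (Fin n))) -
      Ω ((rotMap ρ p.1 : EuclideanSpace ℝ (Fin n)) + p.2)| with hP
  set Q : unitSphere n × EuclideanSpace ℝ (Fin n) → ℝ≥0∞ := fun p =>
    ENNReal.ofReal |Ω ((p.1 : EuclideanSpace ℝ (Fin n))) -
      Ω ((rotMap ρ p.1 : EuclideanSpace ℝ (Fin n)) + p.2)| with hQ
  have hPaem : AEMeasurable P (σ.prod (volume.restrict B1)) :=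
    joint_aemeas hhom hn hint hB1m (fun h hh => h2δ1 h (hB1norm' h hh))
      (fun h hh => hmapAll h (h2δr₀ h (hB1norm' h hh))) (rotMap ρ) (rotMap ρ)
      (rotMap_measurePreserving ρ) (rotMap_measurePreserving ρ)
  have hQaem : AEMeasurable Q (σ.prod (volume.restrict B1)) :=
    joint_aemeas hhom hn hint hB1m (fun h hh => h2δ1 h (hB1norm' h hh))
      (fun h hh => hmapAll h (h2δr₀ h (hB1norm' h hh))) (fun θ => θ) (rotMap ρ)
      (MeasurePreserving.id σ) (rotMap_measurePreserving ρ)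
  -- pointwise triangle inequality
  have hpt : ∀ (θ : unitSphere n) (h : EuclideanSpace ℝ (Fin n)),
      ENNReal.ofReal |Ω (ρ (θ : EuclideanSpace ℝ (Fin n))) -
        Ω (θ : EuclideanSpace ℝ (Fin n))| ≤ P (θ, h) + Q (θ, h) := by
    intro θ h
    have htri : |Ω (ρ (θ : EuclideanSpace ℝ (Fin n))) - Ω (θ : EuclideanSpace ℝ (Fin n))| ≤
        |Ω (ρ (θ : EuclideanSpace ℝ (Fin n))) - Ω (ρ (θ : EuclideanSpace ℝ (Fin n)) + h)| +
        |Ω ((θ : EuclideanSpace ℝ (Fin n))) - Ω (ρ (θ : EuclideanSpace ℝ (Fin n)) + h)| := by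
      rw [abs_sub_comm (Ω ((θ : EuclideanSpace ℝ (Fin n))))]
      exact abs_sub_le _ _ _
    refine le_trans (ENNReal.ofReal_le_ofReal htri) ?_
    rw [ENNReal.ofReal_add (abs_nonneg _) (abs_nonneg _)]
    exact le_rfl
  -- the main chain
  set L := ∫⁻ θ : unitSphere n, ENNReal.ofReal |Ω (ρ (θ : EuclideanSpace ℝ (Fin n))) -
      Ω (θ : EuclideanSpace ℝ (Fin n))| ∂σ with hL
  have hmain : volume B1 * L ≤
      (∫⁻ p, P p ∂(σ.prod (volume.restrict B1))) +
      (∫⁻ p, Q p ∂(σ.prod (volume.restrict B1))) := by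
    calc volume B1 * L = ∫⁻ θ : unitSphere n, volume B1 *
          ENNReal.ofReal |Ω (ρ (θ : EuclideanSpace ℝ (Fin n))) -
            Ω (θ : EuclideanSpace ℝ (Fin n))| ∂σ :=
          (lintegral_const_mul' _ _ hvB1top).symm
      _ = ∫⁻ θ : unitSphere n, ∫⁻ _h in B1, ENNReal.ofReal
            |Ω (ρ (θ : EuclideanSpace ℝ (Fin n))) -
            Ω (θ : EuclideanSpace ℝ (Fin n))| ∂volume ∂σ := by
          refine lintegral_congr fun θ => ?_
          rw [setLIntegral_const, mul_comm]
      _ ≤ ∫⁻ θ : unitSphere n, ∫⁻ h in B1, (P (θ, h) + Q (θ, h)) ∂volume ∂σ := by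
          refine lintegral_mono fun θ => lintegral_mono fun h => hpt θ h
      _ = ∫⁻ p, (P p + Q p) ∂(σ.prod (volume.restrict B1)) :=
          lintegral_lintegral (hPaem.add hQaem)
      _ = (∫⁻ p, P p ∂(σ.prod (volume.restrict B1))) +
          (∫⁻ p, Q p ∂(σ.prod (volume.restrict B1))) := lintegral_add_left' hPaem _
  -- Term 1
  have hT1 : (∫⁻ p, P p ∂(σ.prod (volume.restrict B1))) ≤ J * volume B1 := by
    rw [lintegral_prod_symm P hPaem]
    calc ∫⁻ h, ∫⁻ θ, P (θ, h) ∂σ ∂(volume.restrict B1)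
        ≤ ∫⁻ _h, J ∂(volume.restrict B1) := by
          refine lintegral_mono_ae ?_
          filter_upwards [ae_restrict_mem hB1m] with h hh
          have heq := rot_step hhom hn hint (h2δ1 h (hB1norm' h hh))
            (hmapAll h (h2δr₀ h (hB1norm' h hh))) ρ
          calc ∫⁻ θ, P (θ, h) ∂σ
              = ∫⁻ θ : unitSphere n, ENNReal.ofReal |Ω (θ : EuclideanSpace ℝ (Fin n)) -
                  Ω ((θ : EuclideanSpace ℝ (Fin n)) + h)| ∂σ := heq
            _ ≤ J := hJbound h (hB1norm' h hh)
      _ = J * volume B1 := by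
          rw [lintegral_const, Measure.restrict_apply MeasurableSet.univ, Set.univ_inter]
  -- Term 2
  have hT2 : (∫⁻ p, Q p ∂(σ.prod (volume.restrict B1))) ≤ J * volume B2 := by
    rw [lintegral_prod Q hQaem]
    have hstep : ∀ θ : unitSphere n, (∫⁻ h in B1, Q (θ, h) ∂volume) ≤
        ∫⁻ y in B2, ENNReal.ofReal |Ω ((θ : EuclideanSpace ℝ (Fin n))) -
          Ω ((θ : EuclideanSpace ℝ (Fin n)) + y)| ∂volume := by
      intro θ
      set u := ρ (θ : EuclideanSpace ℝ (Fin n)) - (θ : EuclideanSpace ℝ (Fin n)) with hu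
      have hcong : ∀ h : EuclideanSpace ℝ (Fin n), Q (θ, h) =
          ENNReal.ofReal |Ω ((θ : EuclideanSpace ℝ (Fin n))) -
            Ω ((θ : EuclideanSpace ℝ (Fin n)) + (u + h))| := by
        intro h
        have : ρ (θ : EuclideanSpace ℝ (Fin n)) + h =
            (θ : EuclideanSpace ℝ (Fin n)) + (u + h) := by
          rw [hu]; abel
        show ENNReal.ofReal |Ω ((θ : EuclideanSpace ℝ (Fin n))) -
            Ω (ρ (θ : EuclideanSpace ℝ (Fin n)) + h)| = _
        rw [this]
      have htrans : (∫⁻ h in B1, Q (θ, h) ∂volume) = ∫⁻ y in (fun x => u + x) '' B1,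
          ENNReal.ofReal |Ω ((θ : EuclideanSpace ℝ (Fin n))) -
            Ω ((θ : EuclideanSpace ℝ (Fin n)) + y)| ∂volume := by
        rw [show (fun h => Q (θ, h)) = fun h => ENNReal.ofReal
          |Ω ((θ : EuclideanSpace ℝ (Fin n))) -
            Ω ((θ : EuclideanSpace ℝ (Fin n)) + (u + h))| from funext hcong]
        exact (measurePreserving_add_left volume u).setLIntegral_comp_emb
          (Homeomorph.addLeft u).measurableEmbedding
          (fun y => ENNReal.ofReal |Ω ((θ : EuclideanSpace ℝ (Fin n))) -
            Ω ((θ : EuclideanSpace ℝ (Fin n)) + y)|) B1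
      rw [htrans]
      apply lintegral_mono_set
      rintro - ⟨b, hb, rfl⟩
      rw [hB2, mem_closedBall_zero_iff]
      have hub : ‖u‖ ≤ δ := hρ _ (norm_coe θ)
      calc ‖u + b‖ ≤ ‖u‖ + ‖b‖ := norm_add_le _ _
        _ ≤ δ + δ := add_le_add hub (hB1norm b hb)
        _ = 2*δ := by ring
    calc ∫⁻ θ, ∫⁻ h in B1, Q (θ, h) ∂volume ∂σ
        ≤ ∫⁻ θ : unitSphere n, ∫⁻ y in B2, ENNReal.ofReal
            |Ω ((θ : EuclideanSpace ℝ (Fin n))) -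
            Ω ((θ : EuclideanSpace ℝ (Fin n)) + y)| ∂volume ∂σ := lintegral_mono hstep
      _ = ∫⁻ p, ENNReal.ofReal |Ω ((p.1 : EuclideanSpace ℝ (Fin n))) -
            Ω ((p.1 : EuclideanSpace ℝ (Fin n)) + p.2)| ∂(σ.prod (volume.restrict B2)) :=
          lintegral_lintegral (joint_aemeas hhom hn hint hB2m
            (fun h hh => h2δ1 h (hB2norm h hh))
            (fun h hh => hmapAll h (h2δr₀ h (hB2norm h hh))) (fun θ => θ) (fun θ => θ)
            (MeasurePreserving.id σ) (MeasurePreserving.id σ))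
      _ = ∫⁻ y, ∫⁻ θ : unitSphere n, ENNReal.ofReal
            |Ω ((θ : EuclideanSpace ℝ (Fin n))) -
            Ω ((θ : EuclideanSpace ℝ (Fin n)) + y)| ∂σ ∂(volume.restrict B2) :=
          lintegral_prod_symm _ (joint_aemeas hhom hn hint hB2m
            (fun h hh => h2δ1 h (hB2norm h hh))
            (fun h hh => hmapAll h (h2δr₀ h (hB2norm h hh))) (fun θ => θ) (fun θ => θ)
            (MeasurePreserving.id σ) (MeasurePreserving.id σ))
      _ ≤ ∫⁻ _y, J ∂(volume.restrict B2) := by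
          refine lintegral_mono_ae ?_
          filter_upwards [ae_restrict_mem hB2m] with y hy
          exact hJbound y (hB2norm y hy)
      _ = J * volume B2 := by
          rw [lintegral_const, Measure.restrict_apply MeasurableSet.univ, Set.univ_inter]
  -- volume comparison
  have hvol2 : volume B2 = ENNReal.ofReal ((2:ℝ)^n) * volume B1 := by
    rw [hB1, hB2, Measure.addHaar_closedBall volume 0 (by linarith : (0:ℝ) ≤ 2*δ),
      Measure.addHaar_closedBall volume 0 hδpos.le, finrank_euclideanSpace_fin,
      mul_pow, ENNReal.ofReal_mul (by positivity), mul_assoc]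
  have hfinal : volume B1 * L ≤ volume B1 * (2 * ENNReal.ofReal ((2:ℝ)^n) * J) := by
    have h1le : volume B1 ≤ ENNReal.ofReal ((2:ℝ)^n) * volume B1 := by
      conv_lhs => rw [← one_mul (volume B1)]
      refine mul_le_mul_left ?_ _
      rw [show (1:ℝ≥0∞) = ENNReal.ofReal 1 by simp]
      exact ENNReal.ofReal_le_ofReal (one_le_pow₀ (by norm_num))
    calc volume B1 * L ≤ J * volume B1 + J * volume B2 := le_trans hmain (add_le_add hT1 hT2)
      _ = J * volume B1 + J * (ENNReal.ofReal ((2:ℝ)^n) * volume B1) := by rw [hvol2]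
      _ ≤ J * (ENNReal.ofReal ((2:ℝ)^n) * volume B1) +
          J * (ENNReal.ofReal ((2:ℝ)^n) * volume B1) := by
          exact add_le_add (mul_le_mul_right h1le _) le_rfl
      _ = volume B1 * (2 * ENNReal.ofReal ((2:ℝ)^n) * J) := by ring
  have hLle : L ≤ 2 * ENNReal.ofReal ((2:ℝ)^n) * J :=
    (ENNReal.mul_le_mul_iff_right hvB1pos hvB1top).mp hfinal
  -- convert back to real integrals
  have hrotint : Integrable (fun θ : unitSphere n =>
      Ω (ρ (θ : EuclideanSpace ℝ (Fin n)))) σ :=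
    ((rotMap_measurePreserving ρ).integrable_comp hint.aestronglyMeasurable).mpr hint
  have habsint : Integrable (fun θ : unitSphere n =>
      |Ω (ρ (θ : EuclideanSpace ℝ (Fin n))) - Ω (θ : EuclideanSpace ℝ (Fin n))|) σ :=
    (hrotint.sub hint).abs
  have hofReal : ENNReal.ofReal (∫ θ : unitSphere n,
      |Ω (ρ (θ : EuclideanSpace ℝ (Fin n))) - Ω (θ : EuclideanSpace ℝ (Fin n))| ∂σ) = L :=
    ofReal_integral_eq_lintegral_ofReal habsint
      (Filter.Eventually.of_forall fun θ => abs_nonneg _)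
  have hRHS : 2 * ENNReal.ofReal ((2:ℝ)^n) * J =
      ENNReal.ofReal (2^(n+2) * (C * n * A * δ)) := by
    rw [hJ, show (2:ℝ≥0∞) = ENNReal.ofReal 2 by simp [ENNReal.ofReal_ofNat],
      ← ENNReal.ofReal_mul (by norm_num), ← ENNReal.ofReal_mul (by positivity)]
    congr 1
    ring
  have hK0 : 0 ≤ 2^(n+2) * (C * n * A * δ) := by
    have h1 : 0 ≤ (C * n * A) * ((2:ℝ)^(n+2) * δ) :=
      mul_nonneg hCA (by positivity)
    nlinarith [h1]
  have := le_trans (le_of_eq hofReal) (le_trans hLle (le_of_eq hRHS))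
  exact (ENNReal.ofReal_le_ofReal_iff hK0).mp this

end L1A


namespace L1A
open scoped Pointwise ENNReal NNReal
variable {n : ℕ}

/-- the rotation of the sphere as a homeomorphism -/
def rotHomeo (ρ : EuclideanSpace ℝ (Fin n) ≃ₗᵢ[ℝ] EuclideanSpace ℝ (Fin n)) :
    unitSphere n ≃ₜ unitSphere n where
  toFun := rotMap ρ
  invFun := rotMap ρ.symm
  left_inv θ := Subtype.ext (by simp [rotMap])
  right_inv θ := Subtype.ext (by simp [rotMap])
  continuous_toFun := (ρ.continuous.comp continuous_subtype_val).subtype_mk _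
  continuous_invFun := (ρ.symm.continuous.comp continuous_subtype_val).subtype_mk _

lemma integral_abs_comp_rot {Ω : EuclideanSpace ℝ (Fin n) → ℝ}
    (ρ : EuclideanSpace ℝ (Fin n) ≃ₗᵢ[ℝ] EuclideanSpace ℝ (Fin n)) :
    (∫ θ : unitSphere n, |Ω (ρ (θ : EuclideanSpace ℝ (Fin n)))| ∂(sphereMeasure n)) =
      ∫ θ : unitSphere n, |Ω ((θ : EuclideanSpace ℝ (Fin n)))| ∂(sphereMeasure n) :=
  (rotMap_measurePreserving ρ).integral_comp (rotHomeo ρ).measurableEmbedding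
    (fun θ => |Ω ((θ : EuclideanSpace ℝ (Fin n)))|)

lemma trivial_bound {Ω : EuclideanSpace ℝ (Fin n) → ℝ}
    (hint : Integrable (fun θ : unitSphere n => Ω (θ : EuclideanSpace ℝ (Fin n)))
      (sphereMeasure n))
    (ρ : EuclideanSpace ℝ (Fin n) ≃ₗᵢ[ℝ] EuclideanSpace ℝ (Fin n)) :
    (∫ θ : unitSphere n, |Ω (ρ (θ : EuclideanSpace ℝ (Fin n))) -
        Ω (θ : EuclideanSpace ℝ (Fin n))| ∂(sphereMeasure n)) ≤
      2 * ∫ θ : unitSphere n, |Ω ((θ : EuclideanSpace ℝ (Fin n)))| ∂(sphereMeasure n) := by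
  have hrotint : Integrable (fun θ : unitSphere n =>
      Ω (ρ (θ : EuclideanSpace ℝ (Fin n)))) (sphereMeasure n) :=
    ((rotMap_measurePreserving ρ).integrable_comp hint.aestronglyMeasurable).mpr hint
  calc (∫ θ : unitSphere n, |Ω (ρ (θ : EuclideanSpace ℝ (Fin n))) -
        Ω (θ : EuclideanSpace ℝ (Fin n))| ∂(sphereMeasure n))
      ≤ ∫ θ : unitSphere n, (|Ω (ρ (θ : EuclideanSpace ℝ (Fin n)))| +
          |Ω (θ : EuclideanSpace ℝ (Fin n))|) ∂(sphereMeasure n) :=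
        integral_mono ((hrotint.sub hint).abs) (hrotint.abs.add hint.abs)
          (fun θ => abs_sub _ _)
    _ = (∫ θ : unitSphere n, |Ω (ρ (θ : EuclideanSpace ℝ (Fin n)))| ∂(sphereMeasure n)) +
        ∫ θ : unitSphere n, |Ω (θ : EuclideanSpace ℝ (Fin n))| ∂(sphereMeasure n) :=
        integral_add hrotint.abs hint.abs
    _ = 2 * ∫ θ : unitSphere n, |Ω ((θ : EuclideanSpace ℝ (Fin n)))| ∂(sphereMeasure n) := by
        rw [integral_abs_comp_rot ρ]; ring

end L1A


/-- If `Ω` is homogeneous of degree zero, integrable with mean value zero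
on `S^{n-1}`, and satisfies the regularity condition
`sup_{|ξ|=1} ∫_{S^{n-1}} |Ω(θ) - Ω(θ+δξ)| dσ(θ) ≤ C n δ ∫_{S^{n-1}} |Ω(θ)| dσ(θ)`
for all `0 < δ < 1/n`, then `Ω` satisfies the `L¹`-Dini condition. -/
theorem regularity_condition_implies_L1Dini
    {n : ℕ} (hn : 0 < n) (Ω : EuclideanSpace ℝ (Fin n) → ℝ)
    (hhom : HomogeneousZero Ω)
    (hint : Integrable (fun θ : unitSphere n => Ω (θ : EuclideanSpace ℝ (Fin n)))
      (sphereMeasure n))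
    (hmean : ∫ θ : unitSphere n, Ω (θ : EuclideanSpace ℝ (Fin n)) ∂(sphereMeasure n) = 0)
    (C : ℝ)
    (hreg : ∀ δ : ℝ, 0 < δ → δ < 1 / n →
      ∀ ξ : EuclideanSpace ℝ (Fin n), ‖ξ‖ = 1 →
        (∫ θ : unitSphere n,
            |Ω (θ : EuclideanSpace ℝ (Fin n)) - Ω ((θ : EuclideanSpace ℝ (Fin n)) + δ • ξ)|
            ∂(sphereMeasure n)) ≤
          C * n * δ *
            ∫ θ : unitSphere n, |Ω (θ : EuclideanSpace ℝ (Fin n))| ∂(sphereMeasure n)) :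
    L1Dini n Ω := by
  obtain ⟨r₀, hr₀pos, hr₀half, hmapAll⟩ := L1A.exists_good_radius hn
  set A := ∫ θ : unitSphere n, |Ω (θ : EuclideanSpace ℝ (Fin n))| ∂(sphereMeasure n) with hA
  have hA0 : 0 ≤ A := integral_nonneg fun θ => abs_nonneg _
  have hnR : (0:ℝ) < n := Nat.cast_pos.mpr hn
  -- C * n * A is nonnegative
  have hCA : 0 ≤ C * n * A := by
    have hpos : (0:ℝ) < 1/(2*n) := by positivity
    have hlt : 1/(2*(n:ℝ)) < 1/n := by
      rw [div_lt_div_iff₀ (by positivity) hnR]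
      nlinarith
    have h1 := hreg (1/(2*n)) hpos hlt (L1A.bpt hn : EuclideanSpace ℝ (Fin n))
      (L1A.norm_coe (L1A.bpt hn))
    have h2 : 0 ≤ ∫ θ : unitSphere n, |Ω (θ : EuclideanSpace ℝ (Fin n)) -
        Ω ((θ : EuclideanSpace ℝ (Fin n)) + (1/(2*(n:ℝ))) • (L1A.bpt hn : EuclideanSpace ℝ (Fin n)))|
        ∂(sphereMeasure n) := integral_nonneg fun θ => abs_nonneg _
    have h3 : 0 ≤ C * ↑n * (1/(2*(n:ℝ))) * A := le_trans h2 h1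
    have h4 : C * ↑n * (1/(2*(n:ℝ))) * A = (C * ↑n * A) * (1/(2*(n:ℝ))) := by ring
    by_contra hneg
    push_neg at hneg
    have h5 : (C * ↑n * A) * (1/(2*(n:ℝ))) < 0 := mul_neg_of_neg_of_pos hneg (by positivity)
    rw [h4] at h3
    linarith
  -- the threshold
  set δ₂ : ℝ := min (r₀/2) (1/(4*n)) with hδ₂
  have hδ₂pos : 0 < δ₂ := lt_min (by linarith) (by positivity)
  set K₀ : ℝ := 2^(n+2) * (C * n * A) with hK₀
  have hK₀0 : 0 ≤ K₀ := mul_nonneg (by positivity) hCA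
  -- small-δ bound
  have hsmall : ∀ δ : ℝ, 0 < δ → δ < δ₂ → omegaRot n Ω δ ≤ K₀ * δ := by
    intro δ h1 h2
    apply Real.sSup_le
    · rintro I ⟨ρ, -, hρ, rfl⟩
      have hδr : 2*δ ≤ r₀ := by
        have := lt_of_lt_of_le h2 (min_le_left _ _); linarith
      have hδn : 2*δ < 1/n := by
        have h5 := lt_of_lt_of_le h2 (min_le_right _ _)
        have h6 : δ * (4*(n:ℝ)) < 1 := (lt_div_iff₀ (by positivity)).mp h5
        rw [lt_div_iff₀ hnR]
        nlinarith
      have := L1A.rotation_estimate hhom hn hint C hreg hr₀pos hr₀half hmapAll hCA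
        h1 hδr hδn ρ hρ
      calc (∫ θ : unitSphere n, |Ω (ρ (θ : EuclideanSpace ℝ (Fin n))) -
            Ω (θ : EuclideanSpace ℝ (Fin n))| ∂(sphereMeasure n))
          ≤ 2^(n+2) * (C * n * A * δ) := this
        _ = K₀ * δ := by rw [hK₀]; ring
    · exact mul_nonneg hK₀0 h1.le
  -- trivial bound
  have htriv : ∀ δ : ℝ, omegaRot n Ω δ ≤ 2*A := by
    intro δ
    apply Real.sSup_le
    · rintro I ⟨ρ, -, -, rfl⟩
      exact L1A.trivial_bound hint ρ
    · linarith
  refine ⟨hint, ?_⟩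
  set K : ℝ := max K₀ (2*A/δ₂) with hK
  have hbound : ∀ δ ∈ Ioo (0:ℝ) 1, ENNReal.ofReal (omegaRot n Ω δ / δ) ≤ ENNReal.ofReal K := by
    intro δ hδ
    apply ENNReal.ofReal_le_ofReal
    rcases lt_or_ge δ δ₂ with hlt | hge
    · refine le_trans ?_ (le_max_left _ _)
      rw [div_le_iff₀ hδ.1]
      exact hsmall δ hδ.1 hlt
    · refine le_trans ?_ (le_max_right _ _)
      rw [div_le_div_iff₀ hδ.1 hδ₂pos]
      nlinarith [mul_le_mul_of_nonneg_right (htriv δ) hδ₂pos.le,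
        mul_le_mul_of_nonneg_left hge (by linarith : (0:ℝ) ≤ 2*A)]
  calc ∫⁻ δ in Ioo (0:ℝ) 1, ENNReal.ofReal (omegaRot n Ω δ / δ) ∂volume
      ≤ ∫⁻ _δ in Ioo (0:ℝ) 1, ENNReal.ofReal K ∂volume := by
        refine lintegral_mono_ae ?_
        filter_upwards [ae_restrict_mem measurableSet_Ioo] with δ hδ
        exact hbound δ hδ
    _ = ENNReal.ofReal K * volume (Ioo (0:ℝ) 1) := by
        rw [lintegral_const, Measure.restrict_apply MeasurableSet.univ, Set.univ_inter]
    _ < ⊤ := ENNReal.mul_lt_top ENNReal.ofReal_lt_top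
        (by rw [Real.volume_Ioo]; exact ENNReal.ofReal_lt_top)
end
end

section
/- Let θ ∈ S^{n-1} and 0 < δ < 1/2. Then the spherical cap {η ∈ S^{n-1} : |η − θ| ≤ δ} is contained in the set {(θ + 2δξ)/|θ + 2δξ| : ξ ∈ S^{n-1}}. -/
open Set

/-- For `θ ∈ S^{n-1}` and `0 < δ < 1/2`, the spherical cap
`{η ∈ S^{n-1} : |η - θ| ≤ δ}` is contained in `{(θ + 2δξ)/|θ + 2δξ| : ξ ∈ S^{n-1}}`. -/
theorem cap_subset_normalized_translates
    {n : ℕ} (θ : EuclideanSpace ℝ (Fin n)) (hθ : ‖θ‖ = 1)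
    (δ : ℝ) (hδ0 : 0 < δ) (hδ : δ < 1 / 2) :
    {η : EuclideanSpace ℝ (Fin n) | ‖η‖ = 1 ∧ ‖η - θ‖ ≤ δ} ⊆
      {η : EuclideanSpace ℝ (Fin n) | ∃ ξ : EuclideanSpace ℝ (Fin n), ‖ξ‖ = 1 ∧
        η = ‖θ + (2 * δ) • ξ‖⁻¹ • (θ + (2 * δ) • ξ)} := by
  rintro η ⟨hη, hηθ⟩
  set c : ℝ := inner ℝ η θ with hc
  have hsq : ‖η - θ‖ ^ 2 = 2 - 2 * c := by
    rw [norm_sub_sq_real, hη, hθ]; ring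
  have hcap : 2 - 2 * c ≤ δ ^ 2 := by
    rw [← hsq]
    have := norm_nonneg (η - θ)
    nlinarith
  have hc0 : 0 < c := by nlinarith
  have hdisc : 0 ≤ c ^ 2 - 1 + 4 * δ ^ 2 := by nlinarith
  set s : ℝ := Real.sqrt (c ^ 2 - 1 + 4 * δ ^ 2) with hs
  have hs2 : s ^ 2 = c ^ 2 - 1 + 4 * δ ^ 2 := Real.sq_sqrt hdisc
  have hsnn : 0 ≤ s := Real.sqrt_nonneg _
  set t : ℝ := c + s with ht
  have ht0 : 0 < t := by positivity
  have hnorm2 : ‖t • η - θ‖ ^ 2 = (2 * δ) ^ 2 := by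
    rw [norm_sub_sq_real, real_inner_smul_left, norm_smul, hη, hθ, ← hc]
    simp only [Real.norm_eq_abs, mul_one]
    rw [abs_of_pos ht0]
    nlinarith
  have hnorm : ‖t • η - θ‖ = 2 * δ := by
    have h2δ : (0:ℝ) ≤ 2 * δ := by positivity
    nlinarith [norm_nonneg (t • η - θ)]
  refine ⟨(2 * δ)⁻¹ • (t • η - θ), ?_, ?_⟩
  · rw [norm_smul, hnorm, Real.norm_eq_abs, abs_of_pos (by positivity : (0:ℝ) < (2*δ)⁻¹)]
    field_simp
  · have h2δne : (2 * δ : ℝ) ≠ 0 := by positivity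
    have key : θ + (2 * δ) • ((2 * δ)⁻¹ • (t • η - θ)) = t • η := by
      rw [smul_inv_smul₀ h2δne]; abel
    rw [key, norm_smul, hη, Real.norm_eq_abs, abs_of_pos ht0, mul_one,
      inv_smul_smul₀ (ne_of_gt ht0)]
end

section
/- Let Ω be homogeneous of degree zero on ℝⁿ \ {0} with Ω ∈ L¹(S^{n-1}). Then for every h ∈ ℝⁿ with 0 < |h| < 1, ∫_{S^{n-1}} |Ω((x+h)/|x+h|)| dσ(x) ≤ 2^{n−1} ∫_{S^{n-1}} |Ω(x)| dσ(x). Consequently sup_{|h|≤δ} ∫_{S^{n-1}} |Ω(θ+h)| dσ(θ) ≤ 2^{n−1} ‖Ω‖_{L¹(S^{n-1})} for every 0 < δ < 1. -/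
open MeasureTheory Filter Set

noncomputable section

section Aux
open Metric
open scoped ENNReal NNReal Classical

-- scalar inequality
lemma scalar_ineq {n : ℕ} (hn : 0 < n) {a b : ℝ} (ha : 0 ≤ a) (hb0 : 0 < b) (hb2 : b ≤ 2)
    (hab : a ^ 2 ≤ 2 * b) (h1 : n = 1 → a ^ 2 = b ^ 2) : a ^ n ≤ 2 ^ (n - 1) * b := by
  rcases eq_or_lt_of_le (show 1 ≤ n from hn) with h | h
  · have hab' : a = b := by
      have := h1 h.symm
      nlinarith
    simp [← h, hab']
  · -- n ≥ 2
    have hn2 : 2 ≤ n := h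
    have key : (a ^ n) ^ 2 ≤ (2 ^ (n - 1) * b) ^ 2 := by
      have e1 : (a ^ n) ^ 2 = (a ^ 2) ^ n := by ring
      have e2 : (a ^ 2) ^ n ≤ (2 * b) ^ n := by
        apply pow_le_pow_left₀ (by positivity) hab
      have e3 : (2 * b) ^ n = 2 ^ n * (b ^ (n - 2) * b ^ 2) := by
        rw [mul_pow]
        congr 1
        rw [← pow_add]
        congr 1
        omega
      have e4 : b ^ (n - 2) ≤ 2 ^ (n - 2) := pow_le_pow_left₀ hb0.le hb2 _
      have e5 : 2 ^ n * (b ^ (n-2) * b ^ 2) ≤ 2 ^ n * (2 ^ (n-2) * b ^ 2) := by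
        gcongr
      have e6 : (2:ℝ) ^ n * (2 ^ (n-2) * b ^ 2) = (2 ^ (n-1) * b)^2 := by
        rw [mul_pow, ← pow_mul, ← mul_assoc, ← pow_add]
        congr 1
        congr 1
        omega
      calc (a ^ n) ^ 2 = (a^2)^n := e1
        _ ≤ (2*b)^n := e2
        _ = 2 ^ n * (b ^ (n-2) * b^2) := e3
        _ ≤ 2 ^ n * (2 ^ (n-2) * b^2) := e5
        _ = (2 ^ (n-1) * b)^2 := e6
    have h2 : (0:ℝ) ≤ 2 ^ (n-1) * b := by positivity
    nlinarith [pow_nonneg ha n]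


variable {n : ℕ}

local notation "E" => EuclideanSpace ℝ (Fin n)

lemma hasFDerivAt_norm' {x : E} (hx : x ≠ 0) :
    HasFDerivAt (fun y : E => ‖y‖) ((‖x‖⁻¹ : ℝ) • innerSL ℝ x) x := by
  have h1 : HasFDerivAt (fun y : E => ‖y‖ ^ 2) (2 • innerSL ℝ x) x :=
    (hasStrictFDerivAt_norm_sq x).hasFDerivAt
  have hx2 : ‖x‖ ^ 2 ≠ 0 := pow_ne_zero _ (norm_ne_zero_iff.2 hx)
  have h2 := (Real.hasDerivAt_sqrt hx2).comp_hasFDerivAt x h1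
  have h3 : (fun y : E => Real.sqrt (‖y‖ ^ 2)) = fun y : E => ‖y‖ := by
    funext y; rw [Real.sqrt_sq (norm_nonneg y)]
  simp only [Function.comp_def] at h2
  rw [h3] at h2
  refine h2.congr_fderiv ?_
  ext v
  have hnx : ‖x‖ ≠ 0 := norm_ne_zero_iff.2 hx
  rw [Real.sqrt_sq (norm_nonneg x)]
  simp [smul_smul]
  field_simp

lemma hasFDerivAt_Psi (h : E) {x : E} (hx : x ≠ 0) :
    HasFDerivAt (fun y : E => y + ‖y‖ • h)
      (ContinuousLinearMap.id ℝ E + (((‖x‖⁻¹ : ℝ) • innerSL ℝ x).smulRight h)) x :=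
  (hasFDerivAt_id x).add ((hasFDerivAt_norm' hx).smul_const h)

lemma det_A (h : E) (x : E) :
    (ContinuousLinearMap.id ℝ E + (((‖x‖⁻¹ : ℝ) • innerSL ℝ x).smulRight h)).det
      = 1 + ‖x‖⁻¹ * (inner ℝ x h : ℝ) := by
  classical
  set b := (EuclideanSpace.basisFun (Fin n) ℝ).toBasis with hb
  rw [ContinuousLinearMap.det, ← LinearMap.det_toMatrix b]
  have : (LinearMap.toMatrix b b) (ContinuousLinearMap.id ℝ E
      + (((‖x‖⁻¹ : ℝ) • innerSL ℝ x).smulRight h) : E →L[ℝ] E).toLinearMap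
      = 1 + Matrix.replicateCol Unit (fun i => h i) * Matrix.replicateRow Unit (fun j => ‖x‖⁻¹ * x j) := by
    ext i j
    rw [LinearMap.toMatrix_apply]
    simp [Matrix.mul_apply, Matrix.one_apply, b, EuclideanSpace.basisFun, mul_comm]
    left
    have hs : ∀ k, ((LinearIsometryEquiv.refl ℝ E).symm (EuclideanSpace.single j (1:ℝ))) k
        = if k = j then 1 else 0 := by
      intro k
      rw [show (LinearIsometryEquiv.refl ℝ E).symm (EuclideanSpace.single j (1:ℝ)) = EuclideanSpace.single j (1:ℝ) from rfl, EuclideanSpace.single_apply]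
    rw [show (LinearIsometryEquiv.refl ℝ E).symm (EuclideanSpace.single j (1:ℝ)) = EuclideanSpace.single j (1:ℝ) from rfl]
    simp [EuclideanSpace.inner_single_right, mul_comm]
  rw [this, Matrix.det_one_add_replicateCol_mul_replicateRow]
  simp [dotProduct, PiLp.inner_apply, RCLike.inner_apply, Finset.mul_sum, Finset.sum_mul,
    mul_comm, mul_left_comm, mul_assoc]


def sphM (n : ℕ) (hn : 0 < n) : EuclideanSpace ℝ (Fin n) → EuclideanSpace ℝ (Fin n) :=
  fun x => if x = 0 then EuclideanSpace.single (⟨0, hn⟩ : Fin n) (1:ℝ) else ‖x‖⁻¹ • x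

lemma sphM_mem (hn : 0 < n) (x : E) : sphM n hn x ∈ sphere (0:E) 1 := by
  rw [mem_sphere_zero_iff_norm, sphM]
  split_ifs with hx
  · simp
  · rw [norm_smul, norm_inv, norm_norm, inv_mul_cancel₀ (norm_ne_zero_iff.2 hx)]

def sphProj (n : ℕ) (hn : 0 < n) : EuclideanSpace ℝ (Fin n) → sphere (0:EuclideanSpace ℝ (Fin n)) 1 :=
  fun x => ⟨sphM n hn x, sphM_mem hn x⟩

lemma sphM_measurable (hn : 0 < n) : Measurable (sphM n hn) := by
  unfold sphM
  exact Measurable.ite measurableSet_eq measurable_const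
    ((measurable_norm.inv).smul measurable_id)

lemma sphProj_measurable (hn : 0 < n) : Measurable (sphProj n hn) :=
  (sphM_measurable hn).subtype_mk

lemma sphProj_apply (hn : 0 < n) {x : E} (hx : x ≠ 0) :
    (sphProj n hn x : E) = ‖x‖⁻¹ • x := by
  simp [sphProj, sphM, hx]

lemma sphProj_smul (hn : 0 < n) {c : ℝ} (hc : 0 < c) {x : E} (hx : x ≠ 0) :
    sphProj n hn (c • x) = sphProj n hn x := by
  have hcx : c • x ≠ 0 := smul_ne_zero hc.ne' hx
  apply Subtype.ext
  rw [sphProj_apply hn hcx, sphProj_apply hn hx, norm_smul, smul_smul]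
  congr 1
  rw [Real.norm_eq_abs, abs_of_pos hc, mul_inv, mul_comm c⁻¹ ‖x‖⁻¹, mul_assoc,
    inv_mul_cancel₀ hc.ne', mul_one]

lemma sphProj_coe (hn : 0 < n) (θ : sphere (0:E) 1) : sphProj n hn (θ : E) = θ := by
  have h1 : ‖(θ:E)‖ = 1 := mem_sphere_zero_iff_norm.1 θ.2
  have : (θ:E) ≠ 0 := by
    intro h; rw [h] at h1; simp at h1
  apply Subtype.ext
  rw [sphProj_apply hn this, h1]
  simp

lemma polar_lintegral (hn : 0 < n) (R : sphere (0:E) 1 → ℝ) (hR : Measurable R)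
    (hRpos : ∀ θ, 0 < R θ) (g : sphere (0:E) 1 → ℝ≥0∞) (hg : Measurable g) :
    ∫⁻ x in {x : E | x ≠ 0 ∧ ‖x‖ < R (sphProj n hn x)}, g (sphProj n hn x) ∂volume
      = ∫⁻ θ, g θ * ENNReal.ofReal (R θ ^ n / n) ∂((volume : Measure E).toSphere) := by
  haveI : Nontrivial E := by
    apply Module.nontrivial_of_finrank_pos (R := ℝ)
    rw [finrank_euclideanSpace_fin]; exact hn
  set S : Set E := {x : E | x ≠ 0 ∧ ‖x‖ < R (sphProj n hn x)} with hSdef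
  have hS : MeasurableSet S := by
    apply MeasurableSet.inter
    · exact (MeasurableSet.singleton (0:E)).compl.congr rfl
    · exact measurableSet_lt measurable_norm (hR.comp (sphProj_measurable hn))
  set f₂ : sphere (0:E) 1 × Ioi (0:ℝ) → ℝ≥0∞ :=
    fun p => ({p : sphere (0:E) 1 × Ioi (0:ℝ) | (p.2 : ℝ) < R p.1}).indicator (fun p => g p.1) p
    with hf₂def
  have hset : MeasurableSet {p : sphere (0:E) 1 × Ioi (0:ℝ) | (p.2 : ℝ) < R p.1} :=
    measurableSet_lt (measurable_subtype_coe.comp measurable_snd) (hR.comp measurable_fst)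
  have hf₂ : Measurable f₂ := (hg.comp measurable_fst).indicator hset
  have hmp := (volume : Measure E).measurePreserving_homeomorphUnitSphereProd
  have key := hmp.lintegral_comp hf₂
  -- identify LHS
  have hcomp : ∀ x : ({0}ᶜ : Set E), f₂ (homeomorphUnitSphereProd E x)
      = S.indicator (fun y => g (sphProj n hn y)) (x : E) := by
    rintro ⟨x, hx⟩
    simp only [hf₂def]
    have hx0 : x ≠ 0 := hx
    have hsp : sphProj n hn x = ⟨‖x‖⁻¹ • x, by
        rw [mem_sphere_zero_iff_norm, norm_smul, norm_inv, norm_norm,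
          inv_mul_cancel₀ (norm_ne_zero_iff.2 hx0)]⟩ := Subtype.ext (sphProj_apply hn hx0)
    have hfst : (homeomorphUnitSphereProd E ⟨x, hx⟩).1 = sphProj n hn x :=
      Subtype.ext (by simp [sphProj_apply hn hx0])
    by_cases hlt : ‖x‖ < R (sphProj n hn x)
    · rw [indicator_of_mem, indicator_of_mem]
      · simp only [hfst]
      · exact ⟨hx0, hlt⟩
      · simpa [hfst] using hlt
    · rw [indicator_of_notMem, indicator_of_notMem]
      · exact fun hc => hlt hc.2
      · simpa [hfst] using hlt
  rw [lintegral_congr hcomp] at key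
  rw [lintegral_subtype_comap ((MeasurableSet.singleton (0:E)).compl) _] at key
  rw [lintegral_indicator (hS.congr rfl)] at key
  rw [Measure.restrict_restrict hS] at key
  have hSsub : S ∩ ({0}ᶜ : Set E) = S := by
    apply inter_eq_left.2; intro x hx; exact hx.1
  rw [hSsub] at key
  rw [key, lintegral_prod _ hf₂.aemeasurable]
  apply lintegral_congr
  intro θ
  have hinner : ∀ r : Ioi (0:ℝ), f₂ (θ, r)
      = (Iio (⟨R θ, hRpos θ⟩ : Ioi (0:ℝ))).indicator (fun _ => g θ) r := by
    intro r
    simp only [hf₂def]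
    by_cases hr : (r : ℝ) < R θ
    · rw [indicator_of_mem
        (show (θ,r) ∈ {p : sphere (0:E) 1 × Ioi (0:ℝ) | (p.2:ℝ) < R p.1} from hr),
        indicator_of_mem (show r ∈ Iio (⟨R θ, hRpos θ⟩ : Ioi (0:ℝ)) from hr)]
    · rw [indicator_of_notMem
        (show (θ,r) ∉ {p : sphere (0:E) 1 × Ioi (0:ℝ) | (p.2:ℝ) < R p.1} from hr),
        indicator_of_notMem (show r ∉ Iio (⟨R θ, hRpos θ⟩ : Ioi (0:ℝ)) from hr)]
  rw [lintegral_congr hinner, lintegral_indicator_const measurableSet_Iio,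
    Measure.volumeIoiPow_apply_Iio]
  rw [finrank_euclideanSpace_fin]
  congr 2
  rw [Nat.sub_add_cancel hn, Nat.cast_pred hn]
  ring_nf

lemma sphere_add_ne_zero {h : E} (hh : ‖h‖ < 1) (θ : sphere (0:E) 1) :
    (θ:E) + h ≠ 0 ∧ 1 - ‖h‖ ≤ ‖(θ:E) + h‖ := by
  have h1 : ‖(θ:E)‖ = 1 := mem_sphere_zero_iff_norm.1 θ.2
  have h2 : ‖(θ:E)‖ - ‖-h‖ ≤ ‖(θ:E) - (-h)‖ := norm_sub_norm_le _ _
  rw [sub_neg_eq_add, norm_neg, h1] at h2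
  refine ⟨fun hc => ?_, h2⟩
  rw [hc, norm_zero] at h2
  linarith

lemma psi_smul (hn : 0 < n) (h : E) {x : E} (hx : x ≠ 0) :
    x + ‖x‖ • h = ‖x‖ • (((sphProj n hn x : E)) + h) := by
  rw [smul_add, sphProj_apply hn hx, smul_smul, mul_inv_cancel₀ (norm_ne_zero_iff.2 hx),
    one_smul]

lemma psi_inj {h : E} (hh : ‖h‖ < 1) :
    Function.Injective (fun y : E => y + ‖y‖ • h) := by
  intro x y heq
  have heq' : x + ‖x‖ • h = y + ‖y‖ • h := heq
  have hxy : x - y = (‖y‖ - ‖x‖) • h := by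
    have e : x - y = (x + ‖x‖ • h) - (y + ‖y‖ • h) + (‖y‖ • h - ‖x‖ • h) := by abel
    rw [e, heq', sub_self, zero_add, ← sub_smul]
  have h3 : ‖x - y‖ ≤ ‖x - y‖ * ‖h‖ := by
    calc ‖x - y‖ = |‖y‖ - ‖x‖| * ‖h‖ := by rw [hxy, norm_smul, Real.norm_eq_abs]
      _ ≤ ‖y - x‖ * ‖h‖ := mul_le_mul_of_nonneg_right (abs_norm_sub_norm_le y x) (norm_nonneg h)
      _ = ‖x - y‖ * ‖h‖ := by rw [norm_sub_rev]
  have h5 : ‖x - y‖ ≤ 0 := by nlinarith [norm_nonneg (x - y)]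
  have := le_antisymm h5 (norm_nonneg _)
  rwa [norm_eq_zero, sub_eq_zero] at this

set_option maxHeartbeats 1000000 in
lemma psi_surj (hn : 0 < n) {h : E} (hh : ‖h‖ < 1) {y : E} (hy0 : y ≠ 0) (hy1 : ‖y‖ < 1) :
    ∃ x : E, (x ≠ 0 ∧ ‖x‖ < ‖((sphProj n hn x : E)) + h‖⁻¹) ∧ x + ‖x‖ • h = y := by
  have hωy : (sphProj n hn y : E) = ‖y‖⁻¹ • y := sphProj_apply hn hy0
  have hωn : ‖(sphProj n hn y : E)‖ = 1 := mem_sphere_zero_iff_norm.1 (sphProj n hn y).2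
  set ω : E := (sphProj n hn y : E) with hω
  set t : ℝ := inner ℝ ω h with ht
  have htle : |t| ≤ ‖h‖ := by
    calc |t| ≤ ‖ω‖ * ‖h‖ := abs_real_inner_le_norm ω h
      _ = ‖h‖ := by rw [hωn, one_mul]
  have hpos : (0:ℝ) ≤ t^2 + 1 - ‖h‖^2 := by
    nlinarith [mul_self_le_mul_self (abs_nonneg t) htle, sq_abs t, norm_nonneg h, sq_nonneg t]
  set q : ℝ := Real.sqrt (t^2 + 1 - ‖h‖^2) with hq
  have hq2 : q^2 = t^2 + 1 - ‖h‖^2 := Real.sq_sqrt hpos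
  have hqnn : 0 ≤ q := Real.sqrt_nonneg _
  have htq : |t| < q := by nlinarith [sq_abs t, abs_nonneg t, norm_nonneg h]
  set c : ℝ := t + q with hc
  have hcpos : 0 < c := by
    have := neg_abs_le t
    simp only [hc]; linarith
  set θv : E := c • ω - h with hθv
  have hθvn : ‖θv‖ = 1 := by
    have e1 : ‖θv‖^2 = ‖c • ω‖^2 - 2 * inner ℝ (c • ω) h + ‖h‖^2 := norm_sub_sq_real _ _
    have e2 : ‖c • ω‖ = c := by
      rw [norm_smul, Real.norm_eq_abs, abs_of_pos hcpos, hωn, mul_one]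
    have e3 : (inner ℝ (c • ω) h : ℝ) = c * t := real_inner_smul_left _ _ _
    rw [e2, e3] at e1
    have e4 : ‖θv‖^2 = 1 := by rw [e1]; nlinarith
    have e5 : (‖θv‖ - 1) * (‖θv‖ + 1) = 0 := by nlinarith
    rcases mul_eq_zero.1 e5 with h' | h'
    · linarith
    · nlinarith [norm_nonneg θv]
  have hθv0 : θv ≠ 0 := by
    intro hcon; rw [hcon, norm_zero] at hθvn; norm_num at hθvn
  have hycpos : (0:ℝ) < ‖y‖ / c := div_pos (norm_pos_iff.2 hy0) hcpos
  have hxne : (‖y‖ / c) • θv ≠ 0 := smul_ne_zero hycpos.ne' hθv0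
  have hsp : sphProj n hn ((‖y‖ / c) • θv) = ⟨θv, mem_sphere_zero_iff_norm.2 hθvn⟩ := by
    rw [sphProj_smul hn hycpos hθv0]
    exact sphProj_coe hn ⟨θv, mem_sphere_zero_iff_norm.2 hθvn⟩
  have hadd : θv + h = c • ω := by rw [hθv]; abel
  have hnx : ‖(‖y‖ / c) • θv‖ = ‖y‖ / c := by
    rw [norm_smul, Real.norm_eq_abs, abs_of_pos hycpos, hθvn, mul_one]
  refine ⟨(‖y‖ / c) • θv, ⟨hxne, ?_⟩, ?_⟩
  · rw [hsp, hnx]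
    rw [show ((⟨θv, mem_sphere_zero_iff_norm.2 hθvn⟩ : sphere (0:E) 1) : E) = θv from rfl,
      hadd, norm_smul, Real.norm_eq_abs, abs_of_pos hcpos, hωn, mul_one]
    rw [div_eq_mul_inv]
    have : ‖y‖ * c⁻¹ < 1 * c⁻¹ := mul_lt_mul_of_pos_right hy1 (inv_pos.2 hcpos)
    linarith
  · rw [psi_smul hn h hxne, hsp, hnx]
    rw [show ((⟨θv, mem_sphere_zero_iff_norm.2 hθvn⟩ : sphere (0:E) 1) : E) = θv from rfl,
      hadd, smul_smul, div_mul_cancel₀ _ hcpos.ne', hωy, smul_smul,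
      mul_inv_cancel₀ (norm_ne_zero_iff.2 hy0), one_smul]

lemma const_div_le {n : ℕ} (hn : 0 < n) {a b : ℝ} (hapos : 0 < a) (hbpos : 0 < b)
    (h2 : (0:ℝ) < 2^(n-1)) (hkey : a^n ≤ 2^(n-1) * b) :
    1/(n*2^(n-1)) ≤ b * ((a⁻¹)^n / n) := by
  have hn' : (0:ℝ) < n := by exact_mod_cast hn
  have hanp : (0:ℝ) < a^n := by positivity
  have hstep : (2^(n-1):ℝ)⁻¹ ≤ b / a^n := by
    rw [le_div_iff₀ hanp]
    calc (2^(n-1):ℝ)⁻¹ * a^n ≤ (2^(n-1):ℝ)⁻¹ * (2^(n-1) * b) := by gcongr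
      _ = b := by field_simp
  calc 1/((n:ℝ)*2^(n-1)) = (2^(n-1):ℝ)⁻¹ * (n:ℝ)⁻¹ := by rw [one_div, mul_inv]; ring
    _ ≤ (b / a^n) * (n:ℝ)⁻¹ := mul_le_mul_of_nonneg_right hstep (by positivity)
    _ = b * ((a⁻¹)^n / n) := by rw [inv_pow, div_eq_mul_inv, div_eq_mul_inv]; ring

lemma one_dim_sq {θ h : EuclideanSpace ℝ (Fin 1)} (h1 : ‖θ‖ = 1) :
    ‖θ + h‖^2 = (1 + (inner ℝ θ h : ℝ))^2 := by
  have h0 : ∀ z : EuclideanSpace ℝ (Fin 1), ‖z‖^2 = (z 0)^2 := by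
    intro z
    rw [EuclideanSpace.norm_eq, Real.sq_sqrt (by positivity)]
    rw [Finset.sum_fin_eq_sum_range, Finset.sum_range_one]
    simp
  have hinner : (inner ℝ θ h : ℝ) = θ 0 * h 0 := by
    simp [PiLp.inner_apply, RCLike.inner_apply, mul_comm]
  have hθ0 : (θ 0)^2 = 1 := by
    have := h0 θ; rw [h1] at this; nlinarith
  have hadd : (θ + h) 0 = θ 0 + h 0 := rfl
  rw [h0 (θ + h), hadd, hinner]
  linear_combination (1 - (h 0)^2) * hθ0

lemma sphere_pow_bound (hn : 0 < n) {h : E} (hh : ‖h‖ < 1) (θ : sphere (0:E) 1) :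
    ‖(θ:E) + h‖ ^ n ≤ 2^(n-1) * (1 + (inner ℝ ((θ:E)) h : ℝ)) := by
  have h1 : ‖(θ:E)‖ = 1 := mem_sphere_zero_iff_norm.1 θ.2
  have htle : |(inner ℝ ((θ:E)) h : ℝ)| ≤ ‖h‖ := by
    calc |(inner ℝ ((θ:E)) h : ℝ)| ≤ ‖(θ:E)‖ * ‖h‖ := abs_real_inner_le_norm _ h
      _ = ‖h‖ := by rw [h1, one_mul]
  have hbpos : 0 < 1 + (inner ℝ ((θ:E)) h : ℝ) := by
    have := neg_abs_le (inner ℝ ((θ:E)) h : ℝ); linarith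
  have hb2 : 1 + (inner ℝ ((θ:E)) h : ℝ) ≤ 2 := by
    have := le_abs_self (inner ℝ ((θ:E)) h : ℝ); linarith
  have hasq : ‖(θ:E) + h‖^2 = 1 + 2*(inner ℝ ((θ:E)) h : ℝ) + ‖h‖^2 := by
    rw [norm_add_sq_real, h1]; ring_nf
  have hab : ‖(θ:E) + h‖^2 ≤ 2 * (1 + (inner ℝ ((θ:E)) h : ℝ)) := by
    have hs1 : ‖h‖^2 ≤ 1 := by nlinarith [norm_nonneg h]
    rw [hasq]; linarith
  have hone : n = 1 → ‖(θ:E) + h‖^2 = (1 + (inner ℝ ((θ:E)) h : ℝ))^2 := by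
    intro hn1
    subst hn1
    exact one_dim_sq h1
  exact scalar_ineq hn (norm_nonneg _) hbpos hb2 hab hone

lemma sphere_inner_pos {h : E} (hh : ‖h‖ < 1) (θ : sphere (0:E) 1) :
    0 < 1 + (inner ℝ ((θ:E)) h : ℝ) := by
  have h1 : ‖(θ:E)‖ = 1 := mem_sphere_zero_iff_norm.1 θ.2
  have htle : |(inner ℝ ((θ:E)) h : ℝ)| ≤ ‖h‖ := by
    calc |(inner ℝ ((θ:E)) h : ℝ)| ≤ ‖(θ:E)‖ * ‖h‖ := abs_real_inner_le_norm _ h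
      _ = ‖h‖ := by rw [h1, one_mul]
  have := neg_abs_le (inner ℝ ((θ:E)) h : ℝ); linarith

set_option maxHeartbeats 1000000 in
lemma key_lintegral (hn : 0 < n) {h : E} (hh : ‖h‖ < 1)
    (g : sphere (0:E) 1 → ℝ≥0∞) (hg : Measurable g) :
    ∫⁻ θ, g (sphProj n hn ((θ:E) + h)) ∂((volume : Measure E).toSphere)
      ≤ ENNReal.ofReal (2^(n-1)) * ∫⁻ θ, g θ ∂((volume : Measure E).toSphere) := by
  have hTmeas : Measurable (fun θ : sphere (0:E) 1 => sphProj n hn ((θ:E) + h)) :=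
    (sphProj_measurable hn).comp ((continuous_subtype_val.add continuous_const).measurable)
  set A : E → (E →L[ℝ] E) :=
    fun x => ContinuousLinearMap.id ℝ E + (((‖x‖⁻¹ : ℝ) • innerSL ℝ x).smulRight h) with hA
  set R₁ : sphere (0:E) 1 → ℝ := fun θ => ‖(θ:E) + h‖⁻¹ with hR₁
  have hR₁meas : Measurable R₁ :=
    ((continuous_subtype_val.add continuous_const).norm.measurable).inv
  have hR₁pos : ∀ θ, 0 < R₁ θ := fun θ =>
    inv_pos.2 (lt_of_lt_of_le (by linarith) (sphere_add_ne_zero hh θ).2)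
  set D : Set E := {x : E | x ≠ 0 ∧ ‖x‖ < R₁ (sphProj n hn x)} with hD
  have hDmeas : MeasurableSet D := by
    apply MeasurableSet.inter
    · exact (MeasurableSet.singleton (0:E)).compl.congr rfl
    · exact measurableSet_lt measurable_norm (hR₁meas.comp (sphProj_measurable hn))
  have hDeriv : ∀ x ∈ D, HasFDerivWithinAt (fun y : E => y + ‖y‖ • h) (A x) D x := fun x hx =>
    (hasFDerivAt_Psi h hx.1).hasFDerivWithinAt
  have hImage : (fun y : E => y + ‖y‖ • h) '' D
      = {x : E | x ≠ 0 ∧ ‖x‖ < (fun _ : sphere (0:E) 1 => (1:ℝ)) (sphProj n hn x)} := by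
    ext y
    simp only [mem_image, mem_setOf_eq]
    constructor
    · rintro ⟨x, ⟨hx0, hxlt⟩, rfl⟩
      have hne := (sphere_add_ne_zero hh (sphProj n hn x)).1
      have hnx : (0:ℝ) < ‖x‖ := norm_pos_iff.2 hx0
      rw [psi_smul hn h hx0]
      constructor
      · exact smul_ne_zero hnx.ne' hne
      · rw [norm_smul, Real.norm_eq_abs, abs_of_pos hnx]
        have := mul_lt_mul_of_pos_right hxlt (norm_pos_iff.2 hne)
        rwa [inv_mul_cancel₀ (norm_ne_zero_iff.2 hne)] at this
    · rintro ⟨hy0, hy1⟩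
      obtain ⟨x, hx, hxy⟩ := psi_surj hn hh hy0 hy1
      exact ⟨x, hx, hxy⟩
  have hCoV := lintegral_image_eq_lintegral_abs_det_fderiv_mul (volume : Measure E) hDmeas
    hDeriv (psi_inj hh).injOn (fun y => g (sphProj n hn y))
  rw [hImage,
    polar_lintegral hn (fun _ => (1:ℝ)) measurable_const (fun _ => one_pos) g hg] at hCoV
  set g' : sphere (0:E) 1 → ℝ≥0∞ :=
    fun θ => ENNReal.ofReal (1 + (inner ℝ ((θ:E)) h : ℝ))
      * g (sphProj n hn ((θ:E) + h)) with hg'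
  have hg'meas : Measurable g' := by
    apply Measurable.mul
    · exact ENNReal.measurable_ofReal.comp (Measurable.const_add
        ((Continuous.inner continuous_subtype_val continuous_const).measurable) 1)
    · exact hg.comp hTmeas
  have hcong : ∀ x ∈ D, ENNReal.ofReal |(A x).det|
      * g (sphProj n hn (x + ‖x‖ • h)) = g' (sphProj n hn x) := by
    intro x hx
    have hx0 : x ≠ 0 := hx.1
    have hdet : (A x).det = 1 + (inner ℝ ((sphProj n hn x : E)) h : ℝ) := by
      rw [hA]
      rw [det_A h x, sphProj_apply hn hx0, real_inner_smul_left]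
    have hdetpos : 0 < (A x).det := by
      rw [hdet]; exact sphere_inner_pos hh _
    have hsp : sphProj n hn (x + ‖x‖ • h) = sphProj n hn (((sphProj n hn x : E)) + h) := by
      rw [psi_smul hn h hx0, sphProj_smul hn (norm_pos_iff.2 hx0)
        (sphere_add_ne_zero hh (sphProj n hn x)).1]
    rw [hsp, abs_of_pos hdetpos, hdet]
  rw [setLIntegral_congr_fun hDmeas hcong,
    polar_lintegral hn R₁ hR₁meas hR₁pos g' hg'meas] at hCoV
  have h2p : (0:ℝ) < 2^(n-1) := by positivity
  have hn' : (0:ℝ) < n := by exact_mod_cast hn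
  have hbound : ∀ θ : sphere (0:E) 1,
      g (sphProj n hn ((θ:E) + h)) * ENNReal.ofReal (1 / (n * 2^(n-1)))
        ≤ g' θ * ENNReal.ofReal (R₁ θ ^ n / n) := by
    intro θ
    have hapos : 0 < ‖(θ:E) + h‖ := lt_of_lt_of_le (by linarith) (sphere_add_ne_zero hh θ).2
    have hbpos := sphere_inner_pos hh θ
    have hkey := sphere_pow_bound hn hh θ
    have hcdl := const_div_le hn hapos hbpos h2p hkey
    have hR₁θ : R₁ θ = ‖(θ:E) + h‖⁻¹ := rfl
    calc g (sphProj n hn ((θ:E) + h)) * ENNReal.ofReal (1 / (n * 2^(n-1)))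
        ≤ g (sphProj n hn ((θ:E) + h)) * ENNReal.ofReal ((1 + (inner ℝ ((θ:E)) h : ℝ))
            * ((‖(θ:E) + h‖⁻¹)^n / n)) := by
          exact mul_le_mul_right (ENNReal.ofReal_le_ofReal hcdl) _
      _ = g' θ * ENNReal.ofReal (R₁ θ ^ n / n) := by
          rw [hg', hR₁θ, ENNReal.ofReal_mul hbpos.le]
          ring
  have hmono : (∫⁻ θ, g (sphProj n hn ((θ:E) + h)) * ENNReal.ofReal (1 / (n * 2^(n-1)))
        ∂((volume : Measure E).toSphere))
      ≤ ∫⁻ θ, g' θ * ENNReal.ofReal (R₁ θ ^ n / n) ∂((volume : Measure E).toSphere) :=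
    lintegral_mono hbound
  rw [lintegral_mul_const' _ _ ENNReal.ofReal_ne_top] at hmono
  rw [← hCoV] at hmono
  rw [lintegral_mul_const' _ _ ENNReal.ofReal_ne_top] at hmono
  -- hmono : (∫⁻ g∘T) * ofReal (1/(n*2^(n-1))) ≤ (∫⁻ g) * ofReal (1^n/n)
  have hcancel : ENNReal.ofReal ((n:ℝ) * 2^(n-1)) * ENNReal.ofReal (1 / ((n:ℝ) * 2^(n-1))) = 1 := by
    rw [← ENNReal.ofReal_mul (by positivity), mul_one_div, div_self (by positivity),
      ENNReal.ofReal_one]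
  calc ∫⁻ θ, g (sphProj n hn ((θ:E) + h)) ∂((volume : Measure E).toSphere)
      = (ENNReal.ofReal ((n:ℝ) * 2^(n-1)) * ENNReal.ofReal (1 / ((n:ℝ) * 2^(n-1))))
        * ∫⁻ θ, g (sphProj n hn ((θ:E) + h)) ∂((volume : Measure E).toSphere) := by
        rw [hcancel, one_mul]
    _ = ENNReal.ofReal ((n:ℝ) * 2^(n-1))
        * ((∫⁻ θ, g (sphProj n hn ((θ:E) + h)) ∂((volume : Measure E).toSphere))
          * ENNReal.ofReal (1 / ((n:ℝ) * 2^(n-1)))) := by ring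
    _ ≤ ENNReal.ofReal ((n:ℝ) * 2^(n-1))
        * ((∫⁻ θ, g θ ∂((volume : Measure E).toSphere)) * ENNReal.ofReal ((1:ℝ)^n / n)) := by
        exact mul_le_mul_right hmono _
    _ = (ENNReal.ofReal ((n:ℝ) * 2^(n-1)) * ENNReal.ofReal ((1:ℝ)^n / n))
        * ∫⁻ θ, g θ ∂((volume : Measure E).toSphere) := by ring
    _ = ENNReal.ofReal (2^(n-1)) * ∫⁻ θ, g θ ∂((volume : Measure E).toSphere) := by
        rw [← ENNReal.ofReal_mul (by positivity)]
        congr 2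
        rw [one_pow]
        field_simp

set_option maxHeartbeats 1000000 in
lemma main_real (hn : 0 < n) (Ω : E → ℝ)
    (hint : Integrable (fun θ : sphere (0:E) 1 => Ω (θ:E)) ((volume : Measure E).toSphere))
    {h : E} (hh : ‖h‖ < 1) :
    (∫ x : sphere (0:E) 1, |Ω (‖(x:E) + h‖⁻¹ • ((x:E) + h))| ∂((volume : Measure E).toSphere))
      ≤ 2 ^ (n - 1) * ∫ x : sphere (0:E) 1, |Ω (x:E)| ∂((volume : Measure E).toSphere) := by
  set ν := ((volume : Measure E).toSphere) with hν
  set T : sphere (0:E) 1 → sphere (0:E) 1 := fun θ => sphProj n hn ((θ:E) + h) with hT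
  have hTmeas : Measurable T :=
    (sphProj_measurable hn).comp ((continuous_subtype_val.add continuous_const).measurable)
  have hTcoe : ∀ θ : sphere (0:E) 1, (T θ : E) = ‖(θ:E) + h‖⁻¹ • ((θ:E) + h) := fun θ =>
    sphProj_apply hn (sphere_add_ne_zero hh θ).1
  set gm : sphere (0:E) 1 → ℝ := hint.1.mk _ with hgm
  have hgmmeas : Measurable gm := hint.1.stronglyMeasurable_mk.measurable
  have hmeq : (fun θ : sphere (0:E) 1 => Ω (θ:E)) =ᵐ[ν] gm := hint.1.ae_eq_mk
  have hgmint : Integrable gm ν := hint.congr hmeq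
  set g : sphere (0:E) 1 → ℝ≥0∞ := fun θ => ENNReal.ofReal |gm θ| with hg
  have hgmeas : Measurable g := ENNReal.measurable_ofReal.comp hgmmeas.abs
  have key := key_lintegral hn hh g hgmeas
  have hfin : ∫⁻ θ, g θ ∂ν ≠ ⊤ := by
    have h2 := hgmint.hasFiniteIntegral
    rw [MeasureTheory.hasFiniteIntegral_iff_norm] at h2
    have : ∀ θ, g θ = ENNReal.ofReal ‖gm θ‖ := by
      intro θ; rw [hg, Real.norm_eq_abs]
    rw [lintegral_congr this]
    exact h2.ne
  -- absolute continuity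
  have hAC : Measure.map T ν ≪ ν := by
    refine Measure.AbsolutelyContinuous.mk (fun s hs hs0 => ?_)
    rw [Measure.map_apply hTmeas hs]
    have hkey2 := key_lintegral hn hh (s.indicator (fun _ => (1:ℝ≥0∞)))
      (measurable_const.indicator hs)
    have hkey2' : ∫⁻ θ, (s.indicator (fun _ => (1:ℝ≥0∞))) (T θ) ∂ν
        ≤ ENNReal.ofReal (2^(n-1)) * ∫⁻ θ, (s.indicator (fun _ => (1:ℝ≥0∞))) θ ∂ν := hkey2
    have he1 : ∀ θ : sphere (0:E) 1,
        (s.indicator (fun _ => (1:ℝ≥0∞))) (T θ)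
          = (T ⁻¹' s).indicator (fun _ => (1:ℝ≥0∞)) θ := by
      intro θ
      by_cases hmem : T θ ∈ s
      · rw [indicator_of_mem hmem, indicator_of_mem (by exact hmem)]
      · rw [indicator_of_notMem hmem, indicator_of_notMem (by exact hmem)]
    rw [lintegral_congr he1, lintegral_indicator_const (hTmeas hs),
      lintegral_indicator_const hs, hs0, mul_zero, mul_zero] at hkey2'
    exact le_antisymm (by simpa using hkey2') zero_le
  have hmeq' : (fun θ : sphere (0:E) 1 => Ω ((T θ : E))) =ᵐ[ν] (fun θ => gm (T θ)) := by
    have := (hmeq.filter_mono hAC.ae_le).comp_tendsto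
      (MeasureTheory.Measure.tendsto_ae_map hTmeas.aemeasurable)
    exact this.mono fun θ hθ => by simpa [Function.comp] using hθ
  have habs : (fun θ : sphere (0:E) 1 => |Ω ((T θ : E))|) =ᵐ[ν] (fun θ => |gm (T θ)|) :=
    hmeq'.mono fun θ hθ => by simp only [hθ]
  have habs0 : (fun θ : sphere (0:E) 1 => |Ω ((θ:E))|) =ᵐ[ν] (fun θ => |gm θ|) :=
    hmeq.mono fun θ hθ => by simp only [hθ]
  -- rewrite integrand of the goal
  have hgoal1 : (∫ x : sphere (0:E) 1, |Ω (‖(x:E) + h‖⁻¹ • ((x:E) + h))| ∂ν)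
      = ∫ x : sphere (0:E) 1, |Ω ((T x : E))| ∂ν := by
    congr 1; funext x; rw [hTcoe x]
  rw [hgoal1, integral_congr_ae habs, integral_congr_ae habs0]
  have hm1 : AEStronglyMeasurable (fun θ : sphere (0:E) 1 => |gm (T θ)|) ν :=
    ((hgmmeas.comp hTmeas).abs).aestronglyMeasurable
  have hm0 : AEStronglyMeasurable (fun θ : sphere (0:E) 1 => |gm θ|) ν :=
    (hgmmeas.abs).aestronglyMeasurable
  rw [integral_eq_lintegral_of_nonneg_ae (Filter.Eventually.of_forall fun θ => abs_nonneg _) hm1,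
    integral_eq_lintegral_of_nonneg_ae (Filter.Eventually.of_forall fun θ => abs_nonneg _) hm0]
  have hid1 : ∫⁻ θ, ENNReal.ofReal |gm (T θ)| ∂ν = ∫⁻ θ, g (sphProj n hn ((θ:E) + h)) ∂ν := rfl
  have hid2 : ∫⁻ θ, ENNReal.ofReal |gm θ| ∂ν = ∫⁻ θ, g θ ∂ν := rfl
  rw [hid1, hid2]
  have h2p : (0:ℝ) ≤ 2^(n-1) := by positivity
  calc (∫⁻ θ, g (sphProj n hn ((θ:E) + h)) ∂ν).toReal
      ≤ (ENNReal.ofReal (2^(n-1)) * ∫⁻ θ, g θ ∂ν).toReal := by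
        apply ENNReal.toReal_mono _ key
        exact ENNReal.mul_ne_top ENNReal.ofReal_ne_top hfin
    _ = 2^(n-1) * (∫⁻ θ, g θ ∂ν).toReal := by
        rw [ENNReal.toReal_mul, ENNReal.toReal_ofReal h2p]

end Aux

/-- For `Ω` homogeneous of degree zero with `Ω ∈ L¹(S^{n-1})` and every
`h` with `0 < |h| < 1`, one has
`∫_{S^{n-1}} |Ω((x+h)/|x+h|)| dσ(x) ≤ 2^{n-1} ∫_{S^{n-1}} |Ω(x)| dσ(x)`; consequently
`sup_{|h|≤δ} ∫_{S^{n-1}} |Ω(θ+h)| dσ(θ) ≤ 2^{n-1} ‖Ω‖_{L¹(S^{n-1})}` for every `0 < δ < 1`. -/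
theorem translated_L1_norm_bound
    {n : ℕ} (hn : 0 < n) (Ω : EuclideanSpace ℝ (Fin n) → ℝ)
    (hhom : HomogeneousZero Ω)
    (hint : Integrable (fun θ : unitSphere n => Ω (θ : EuclideanSpace ℝ (Fin n)))
      (sphereMeasure n)) :
    (∀ h : EuclideanSpace ℝ (Fin n), 0 < ‖h‖ → ‖h‖ < 1 →
      (∫ x : unitSphere n,
          |Ω (‖(x : EuclideanSpace ℝ (Fin n)) + h‖⁻¹ • ((x : EuclideanSpace ℝ (Fin n)) + h))|
          ∂(sphereMeasure n)) ≤
        2 ^ (n - 1) *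
          ∫ x : unitSphere n, |Ω (x : EuclideanSpace ℝ (Fin n))| ∂(sphereMeasure n)) ∧
    (∀ δ : ℝ, 0 < δ → δ < 1 →
      sSup {I : ℝ | ∃ h : EuclideanSpace ℝ (Fin n), ‖h‖ ≤ δ ∧
          I = ∫ θ : unitSphere n, |Ω ((θ : EuclideanSpace ℝ (Fin n)) + h)| ∂(sphereMeasure n)} ≤
        2 ^ (n - 1) *
          ∫ θ : unitSphere n, |Ω (θ : EuclideanSpace ℝ (Fin n))| ∂(sphereMeasure n)) := by
  have hint' : Integrable (fun θ : Metric.sphere (0:EuclideanSpace ℝ (Fin n)) 1 =>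
      Ω (θ : EuclideanSpace ℝ (Fin n))) ((volume : Measure (EuclideanSpace ℝ (Fin n))).toSphere) :=
    hint
  constructor
  · intro h _ h1
    exact main_real hn Ω hint' h1
  · intro δ hδ0 hδ1
    apply Real.sSup_le
    · rintro I ⟨h, hhδ, rfl⟩
      have hh1 : ‖h‖ < 1 := lt_of_le_of_lt hhδ hδ1
      have hcong : ∀ θ : unitSphere n, |Ω ((θ : EuclideanSpace ℝ (Fin n)) + h)|
          = |Ω (‖(θ : EuclideanSpace ℝ (Fin n)) + h‖⁻¹ • ((θ : EuclideanSpace ℝ (Fin n)) + h))| := by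
        intro θ
        have hne := (sphere_add_ne_zero hh1 θ).1
        have hnorm : ‖(θ : EuclideanSpace ℝ (Fin n)) + h‖ ≠ 0 := norm_ne_zero_iff.2 hne
        have hpos : 0 < ‖(θ : EuclideanSpace ℝ (Fin n)) + h‖ := norm_pos_iff.2 hne
        have hx0 : ‖(θ : EuclideanSpace ℝ (Fin n)) + h‖⁻¹ • ((θ : EuclideanSpace ℝ (Fin n)) + h) ≠ 0 :=
          smul_ne_zero (inv_ne_zero hnorm) hne
        have hhomog := hhom ‖(θ : EuclideanSpace ℝ (Fin n)) + h‖ hpos _ hx0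
        rw [smul_inv_smul₀ hnorm] at hhomog
        rw [hhomog]
      have heq : (∫ θ : unitSphere n, |Ω ((θ : EuclideanSpace ℝ (Fin n)) + h)| ∂(sphereMeasure n))
          = ∫ θ : unitSphere n,
              |Ω (‖(θ : EuclideanSpace ℝ (Fin n)) + h‖⁻¹ • ((θ : EuclideanSpace ℝ (Fin n)) + h))|
              ∂(sphereMeasure n) := by
        congr 1
        funext θ
        exact hcong θ
      rw [heq]
      exact main_real hn Ω hint' hh1
    · apply mul_nonneg (by positivity)
      exact integral_nonneg fun θ => abs_nonneg _
end
end
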